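/- arXiv:1912.07992 — 6 statements merged into one kernel-verified Lean document; each statement's English description precedes it below -/
import Mathlib

section
/- Let Σ be an alphabet, M a finite monoid, and k ≥ 0. There is a constant c = k! · |Σ|^{⌈k/2⌉} with the following property. Let a program P over M on Σ^n be a finite sequence of instructions (p_i, f_i) ∈ [n] × M^Σ, i = 1,…,l, and for w ∈ Σ^n let eval_P(w) = f_1(w_{p_1}) f_2(w_{p_2}) ⋯ f_l(w_{p_l}) ∈ M^l viewed as a word over the alphabet M. Then for every word t ∈ M^k there exists a subset I ⊆ [l] with |I| ≤ c · n^{⌈k/2⌉} such that for every I' with I ⊆ I' ⊆ [l] and every w ∈ Σ^n: t is a subword of eval_P(w) if and only if t is a subword of eval_{P[I']}(w), where P[I'] is the subsequence of P consisting of the instructions with index in I'. -/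
/-- The word over `M` obtained by successively evaluating the instructions of the
program `P` on input `w`. -/
def evalWord {n : ℕ} {σ M : Type*} (P : List (Fin n × (σ → M))) (w : Fin n → σ) : List M :=
  P.map (fun ins => ins.2 (w ins.1))

/-- The subsequence of `P` consisting of the entries whose index lies in `S`. -/
def selectIdx {α : Type*} (P : List α) (S : Finset (Fin P.length)) : List α :=
  ((List.finRange P.length).filter (fun i => decide (i ∈ S))).map P.get

namespace Stmt4Aux

open List

variable {n : ℕ} {σ M : Type*}

/-- Value of an instruction on input `w`. -/
def val (w : Fin n → σ) (q : Fin n × (σ → M)) : M := q.2 (w q.1)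

open Classical in
/-- First index `≥ s` in `Q` whose instruction has position `pa.1` and maps letter `pa.2`
to `m0` (or an out-of-range index if none). -/
noncomputable def firstM (Q : List (Fin n × (σ → M))) (m0 : M) (pa : Fin n × σ) (s : ℕ) : ℕ :=
  s + (Q.drop s).findIdx (fun q => decide (q.1 = pa.1 ∧ q.2 pa.2 = m0))

noncomputable def greedy (Q : List (Fin n × (σ → M))) :
    List M → List (Fin n × σ) → ℕ → List ℕ
  | [], _, _ => []
  | _ :: _, [], _ => []
  | m0 :: u, pa :: pas, s => firstM Q m0 pa s :: greedy Q u pas (firstM Q m0 pa s + 1)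

lemma greedy_length_le (Q : List (Fin n × (σ → M))) :
    ∀ (u : List M) (pas : List (Fin n × σ)) (s : ℕ), (greedy Q u pas s).length ≤ u.length
  | [], _, _ => by simp [greedy]
  | _ :: u, [], _ => by simp [greedy]
  | m0 :: u, pa :: pas, s => by
      simpa [greedy] using greedy_length_le Q u pas (firstM Q m0 pa s + 1)

open Classical in
lemma greedyLeft (w : Fin n → σ) (Q : List (Fin n × (σ → M))) :
    ∀ (u : List M) (s e : ℕ), u.Sublist (((Q.take e).drop s).map (val w)) →
    ∃ pas : List (Fin n × σ), pas.length = u.length ∧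
    ∃ il : List (Fin Q.length),
      il.map Fin.val = greedy Q u pas s ∧
      il.Pairwise (· < ·) ∧
      (∀ x ∈ il, s ≤ (x : ℕ) ∧ (x : ℕ) < e) ∧
      il.map (fun i => val w (Q.get i)) = u := by
  intro u
  induction u with
  | nil => exact fun s e _ => ⟨[], rfl, [], rfl, List.Pairwise.nil, by simp, rfl⟩
  | cons m0 u' ih =>
    intro s e hsub
    rw [List.cons_sublist_iff] at hsub
    obtain ⟨r₁, r₂, hr, hm, hu'⟩ := hsub
    rw [List.map_eq_append_iff] at hr
    obtain ⟨A, B, hAB, hA, hB⟩ := hr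
    subst hA hB
    obtain ⟨q, hqA, hq⟩ := List.mem_map.mp hm
    obtain ⟨j, hjA, hjq⟩ := List.mem_iff_getElem.mp hqA
    have hlenL0 : ((Q.take e).drop s).length = min e Q.length - s := by simp
    have hjL0 : j < ((Q.take e).drop s).length := by
      rw [hAB]; simp; omega
    have hj0 : s + j < min e Q.length := by omega
    have hj0e : s + j < e := by omega
    have hj0Q : s + j < Q.length := by omega
    have hL0j : ((Q.take e).drop s)[j]'hjL0 = Q[s + j]'hj0Q := by
      simp [List.getElem_drop, List.getElem_take]
    have hABj : ((Q.take e).drop s)[j]'hjL0 = A[j]'hjA := by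
      rw [List.getElem_of_eq hAB]; exact List.getElem_append_left hjA
    have hvalj : val w (Q[s + j]'hj0Q) = m0 := by
      rw [← hL0j, hABj, hjq]; exact hq
    set qj := Q[s + j]'hj0Q with hqj
    set pa : Fin n × σ := (qj.1, w qj.1) with hpa
    set p : (Fin n × (σ → M)) → Bool :=
      fun q => decide (q.1 = pa.1 ∧ q.2 pa.2 = m0) with hp
    have hdropj : j < (Q.drop s).length := by simp; omega
    have hpj : p ((Q.drop s)[j]'hdropj) = true := by
      have : (Q.drop s)[j]'hdropj = qj := by simp [hqj]
      rw [this, hp]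
      simp only [decide_eq_true_eq]
      exact ⟨rfl, hvalj⟩
    set fi := (Q.drop s).findIdx p with hfi
    have hfij : fi ≤ j := by
      by_contra hcon
      push_neg at hcon
      exact absurd hpj (by simpa using List.not_of_lt_findIdx hcon)
    have hfilt : fi < (Q.drop s).length := lt_of_le_of_lt hfij hdropj
    have hiQ : s + fi < Q.length := by simp at hfilt; omega
    have hie : s + fi < e := by omega
    have hpfi : p ((Q.drop s)[fi]'hfilt) = true := List.findIdx_getElem (w := hfilt)
    have hQfi : (Q.drop s)[fi]'hfilt = Q[s + fi]'hiQ := by simp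
    rw [hQfi, hp] at hpfi
    simp only [decide_eq_true_eq] at hpfi
    obtain ⟨hpfi1, hpfi2⟩ := hpfi
    have hfirstM : firstM Q m0 pa s = s + fi := rfl
    have hvalfi : val w (Q[s + fi]'hiQ) = m0 := by
      show (Q[s + fi]'hiQ).2 (w (Q[s + fi]'hiQ).1) = m0
      rw [hpfi1]
      exact hpfi2
    -- set up IH
    have hBeq : B = (Q.take e).drop (s + A.length) := by
      rw [← List.drop_drop, hAB, List.drop_left]
    have hBsub : B.Sublist ((Q.take e).drop (s + fi + 1)) := by
      rw [hBeq]
      exact List.drop_sublist_drop_left _ (by omega)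
    have hu'2 : u'.Sublist (((Q.take e).drop (s + fi + 1)).map (val w)) :=
      hu'.trans (hBsub.map _)
    obtain ⟨pas', hlen', il', hmap', hpw', hbnd', hval'⟩ := ih (s + fi + 1) e hu'2
    refine ⟨pa :: pas', by simp [hlen'], ⟨s + fi, hiQ⟩ :: il', ?_, ?_, ?_, ?_⟩
    · show (s + fi) :: il'.map Fin.val = greedy Q (m0 :: u') (pa :: pas') s
      rw [greedy, hmap', hfirstM]
    · refine List.Pairwise.cons (fun x hx => ?_) hpw'
      have := (hbnd' x hx).1
      exact Fin.mk_lt_of_lt_val (by omega)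
    · intro x hx
      rcases List.mem_cons.mp hx with h | h
      · subst h; exact ⟨Nat.le_add_right _ _, hie⟩
      · have h1 := (hbnd' x h).1
        exact ⟨by omega, (hbnd' x h).2⟩
    · show val w (Q.get ⟨s + fi, hiQ⟩) :: il'.map (fun i => val w (Q.get i)) = m0 :: u'
      rw [hval']
      simp only [List.get_eq_getElem]
      rw [hvalfi]


lemma sorted_sublist_finRange {N : ℕ} (l : List (Fin N)) (h : l.Pairwise (· < ·)) :
    l.Sublist (List.finRange N) := by
  haveI : IsAntisymm (Fin N) (· < ·) := ⟨fun a b h1 h2 => absurd (h1.trans h2) (lt_irrefl _)⟩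
  apply List.sublist_of_subperm_of_pairwise _ h (List.pairwise_lt_finRange N)
  exact List.Nodup.subperm (List.Pairwise.imp ne_of_lt h) (fun x _ => List.mem_finRange x)

lemma exists_ofFn_eq {γ : Type*} {m : ℕ} (l : List γ) (h : l.length = m) :
    ∃ g : Fin m → γ, List.ofFn g = l := by
  subst h; exact ⟨l.get, List.ofFn_get l⟩

open Classical in
lemma greedyRight (w : Fin n → σ) (Q : List (Fin n × (σ → M))) (v : List M) (e : ℕ)
    (he : e ≤ Q.length)
    (hsub : v.reverse.Sublist (((Q.reverse.take (Q.length - e)).drop 0).map (val w))) :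
    ∃ pas : List (Fin n × σ), pas.length = v.length ∧
    ∃ il : List (Fin Q.length),
      (∀ x ∈ il, Q.length - 1 - (x : ℕ) ∈ greedy Q.reverse v.reverse pas 0) ∧
      il.Pairwise (· < ·) ∧
      (∀ x ∈ il, e ≤ (x : ℕ)) ∧
      il.map (fun i => val w (Q.get i)) = v := by
  obtain ⟨pas, hpl, il', hmap, hpw, hbnd, hval⟩ :=
    greedyLeft w Q.reverse v.reverse 0 (Q.length - e) hsub
  refine ⟨pas, by rw [hpl, List.length_reverse], ?_⟩
  have hlen : Q.reverse.length = Q.length := List.length_reverse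
  set rev : Fin Q.reverse.length → Fin Q.length :=
    fun j => ⟨Q.length - 1 - (j : ℕ), by
      have hj := j.isLt; omega⟩ with hrev
  refine ⟨(il'.map rev).reverse, ?_, ?_, ?_, ?_⟩
  · intro x hx
    rw [List.mem_reverse, List.mem_map] at hx
    obtain ⟨j, hj, rfl⟩ := hx
    have hjlt := j.isLt
    have hveq : Q.length - 1 - ((rev j : Fin Q.length) : ℕ) = (j : ℕ) := by
      simp only [hrev]
      omega
    rw [hveq, ← hmap]
    exact List.mem_map_of_mem hj
  · rw [List.pairwise_reverse, List.pairwise_map]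
    refine List.Pairwise.imp ?_ hpw
    intro a b hab
    have ha := a.isLt
    have hb := b.isLt
    simp only [hrev, Fin.lt_def] at hab ⊢
    omega
  · intro x hx
    rw [List.mem_reverse, List.mem_map] at hx
    obtain ⟨j, hj, rfl⟩ := hx
    have hjlt := j.isLt
    have h2 := (hbnd j hj).2
    simp only [hrev]
    omega
  · rw [List.map_reverse, List.map_map]
    have hgetrev : ((fun i => val w (Q.get i)) ∘ rev) =
        fun j => val w (Q.reverse.get j) := by
      funext j
      simp only [Function.comp_apply, hrev, List.get_eq_getElem]
      rw [List.getElem_reverse]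
    rw [hgetrev, hval, List.reverse_reverse]

end Stmt4Aux

theorem stmt_4 {σ M : Type*} [Fintype σ] [Monoid M] (k n : ℕ)
    (P : List (Fin n × (σ → M))) (t : List M) (ht : t.length = k) :
    ∃ I : Finset (Fin P.length),
      I.card ≤ k.factorial * (Fintype.card σ) ^ ((k + 1) / 2) * n ^ ((k + 1) / 2) ∧
      ∀ I' : Finset (Fin P.length), I ⊆ I' → ∀ w : Fin n → σ,
        (t.Sublist (evalWord P w) ↔ t.Sublist (evalWord (selectIdx P I') w)) := by
  classical
  set m := (k + 1) / 2 with hm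
  set uu := t.take m with huu
  set vv := t.drop m with hvv
  set Pr := P.reverse with hPr
  set vvr := vv.reverse with hvvr
  set IL : Finset ℕ := Finset.univ.biUnion
    (fun g : Fin uu.length → Fin n × σ => (Stmt4Aux.greedy P uu (List.ofFn g) 0).toFinset) with hIL
  set IR : Finset ℕ := Finset.univ.biUnion
    (fun g : Fin vvr.length → Fin n × σ => (Stmt4Aux.greedy Pr vvr (List.ofFn g) 0).toFinset) with hIR
  refine ⟨Finset.univ.filter
      (fun i : Fin P.length => (i : ℕ) ∈ IL ∨ P.length - 1 - (i : ℕ) ∈ IR), ?_, ?_⟩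
  · -- cardinality bound
    have hlu : uu.length = m := by
      rw [huu, List.length_take, ht]; omega
    have hlv : vvr.length = k - m := by
      rw [hvvr, List.length_reverse, hvv, List.length_drop, ht]
    set B := n * Fintype.card σ with hB
    have cardIL : IL.card ≤ B ^ m * m := by
      calc IL.card ≤ ∑ g : (Fin uu.length → Fin n × σ),
            (Stmt4Aux.greedy P uu (List.ofFn g) 0).toFinset.card := Finset.card_biUnion_le
        _ ≤ ∑ _g : (Fin uu.length → Fin n × σ), m := by
            refine Finset.sum_le_sum fun g _ => ?_
            exact le_trans (List.toFinset_card_le _)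
              (le_trans (Stmt4Aux.greedy_length_le _ _ _ _) (le_of_eq hlu))
        _ = (Fintype.card (Fin uu.length → Fin n × σ)) * m := by
            rw [Finset.sum_const, Finset.card_univ, smul_eq_mul]
        _ = B ^ m * m := by
            rw [Fintype.card_fun, Fintype.card_prod, Fintype.card_fin, Fintype.card_fin, hlu]
    have cardIR : IR.card ≤ B ^ (k - m) * (k - m) := by
      calc IR.card ≤ ∑ g : (Fin vvr.length → Fin n × σ),
            (Stmt4Aux.greedy Pr vvr (List.ofFn g) 0).toFinset.card := Finset.card_biUnion_le
        _ ≤ ∑ _g : (Fin vvr.length → Fin n × σ), (k - m) := by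
            refine Finset.sum_le_sum fun g _ => ?_
            exact le_trans (List.toFinset_card_le _)
              (le_trans (Stmt4Aux.greedy_length_le _ _ _ _) (le_of_eq hlv))
        _ = (Fintype.card (Fin vvr.length → Fin n × σ)) * (k - m) := by
            rw [Finset.sum_const, Finset.card_univ, smul_eq_mul]
        _ = B ^ (k - m) * (k - m) := by
            rw [Fintype.card_fun, Fintype.card_prod, Fintype.card_fin, Fintype.card_fin, hlv]
    have hsub1 : (Finset.univ.filter
        (fun i : Fin P.length => (i : ℕ) ∈ IL ∨ P.length - 1 - (i : ℕ) ∈ IR)) ⊆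
        (Finset.univ.filter (fun i : Fin P.length => (i : ℕ) ∈ IL)) ∪
        (Finset.univ.filter (fun i : Fin P.length => P.length - 1 - (i : ℕ) ∈ IR)) := by
      intro x hx
      simp only [Finset.mem_filter, Finset.mem_univ, true_and, Finset.mem_union] at hx ⊢
      tauto
    have h2 : (Finset.univ.filter (fun i : Fin P.length => (i : ℕ) ∈ IL)).card ≤ IL.card := by
      refine Finset.card_le_card_of_injOn (fun i : Fin P.length => (i : ℕ))
        (fun x hx => (Finset.mem_filter.mp hx).2) ?_
      intro a _ b _ hab
      exact Fin.ext hab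
    have h3 : (Finset.univ.filter
        (fun i : Fin P.length => P.length - 1 - (i : ℕ) ∈ IR)).card ≤ IR.card := by
      refine Finset.card_le_card_of_injOn (fun i : Fin P.length => P.length - 1 - (i : ℕ))
        (fun x hx => (Finset.mem_filter.mp hx).2) ?_
      intro a _ b _ hab
      have hab' : P.length - 1 - (a : ℕ) = P.length - 1 - (b : ℕ) := hab
      have ha := a.isLt
      have hb := b.isLt
      exact Fin.ext (by omega)
    have h4 : B ^ (k - m) * (k - m) ≤ B ^ m * (k - m) := by
      rcases Nat.eq_zero_or_pos (k - m) with h | h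
      · simp [h]
      · rcases Nat.eq_zero_or_pos B with hb | hb
        · rw [hb, Nat.zero_pow (show 0 < m by omega), Nat.zero_pow (show 0 < k - m by omega)]
        · exact Nat.mul_le_mul_right _ (Nat.pow_le_pow_right hb (by omega))
    calc (Finset.univ.filter
        (fun i : Fin P.length => (i : ℕ) ∈ IL ∨ P.length - 1 - (i : ℕ) ∈ IR)).card
        ≤ _ := Finset.card_le_card hsub1
      _ ≤ (Finset.univ.filter (fun i : Fin P.length => (i : ℕ) ∈ IL)).card +
          (Finset.univ.filter
            (fun i : Fin P.length => P.length - 1 - (i : ℕ) ∈ IR)).card :=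
          Finset.card_union_le _ _
      _ ≤ IL.card + IR.card := add_le_add h2 h3
      _ ≤ B ^ m * m + B ^ (k - m) * (k - m) := add_le_add cardIL cardIR
      _ ≤ B ^ m * m + B ^ m * (k - m) := Nat.add_le_add_left h4 _
      _ = B ^ m * k := by rw [← Nat.mul_add]; congr 1; omega
      _ ≤ B ^ m * k.factorial := Nat.mul_le_mul_left _ (Nat.self_le_factorial k)
      _ = k.factorial * (Fintype.card σ) ^ m * n ^ m := by rw [hB, mul_pow]; ring
  · -- correctness
    intro I' hII' w
    have hsel : (selectIdx P I').Sublist P := by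
      have h1 := (List.filter_sublist (p := fun i => decide (i ∈ I'))
        (l := List.finRange P.length)).map P.get
      rwa [List.map_get_finRange] at h1
    constructor
    · -- main direction
      intro hT
      have hT' : (uu ++ vv).Sublist (P.map (Stmt4Aux.val w)) := by
        rw [huu, hvv, List.take_append_drop]
        exact hT
      rw [List.append_sublist_iff] at hT'
      obtain ⟨r₁, r₂, hr, hu, hv⟩ := hT'
      rw [List.map_eq_append_iff] at hr
      obtain ⟨P₁, P₂, hP, hP₁, hP₂⟩ := hr
      set e := P₁.length with he
      have heP : e ≤ P.length := by
        rw [hP, List.length_append]; omega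
      have hu2 : uu.Sublist (((P.take e).drop 0).map (Stmt4Aux.val w)) := by
        rw [List.drop_zero, hP, he, List.take_left, hP₁]
        exact hu
      have hv2 : vvr.Sublist (((P.reverse.take (P.length - e)).drop 0).map (Stmt4Aux.val w)) := by
        have h3 : vv.reverse.Sublist ((P.drop e).map (Stmt4Aux.val w)).reverse := by
          apply List.Sublist.reverse
          rw [hP, he, List.drop_left, hP₂]
          exact hv
        rw [← List.map_reverse] at h3
        have h4 : P.reverse.take (P.length - e) = (P.drop e).reverse := by
          have h5 : P.reverse = (P.drop e).reverse ++ (P.take e).reverse := by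
            rw [← List.reverse_append, List.take_append_drop]
          rw [h5]
          exact List.take_left' (by simp)
        rw [List.drop_zero, h4, hvvr]
        exact h3
      obtain ⟨pasL, hplL, isL, hmapL, hpwL, hbndL, hvalL⟩ :=
        Stmt4Aux.greedyLeft w P uu 0 e hu2
      obtain ⟨pasR, hplR, isR, hmemR, hpwR, hbndR, hvalR⟩ :=
        Stmt4Aux.greedyRight w P vv e heP hv2
      set cs := isL ++ isR with hcs
      have hcs_pw : cs.Pairwise (· < ·) := by
        rw [hcs, List.pairwise_append]
        refine ⟨hpwL, hpwR, ?_⟩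
        intro a ha b hb
        have h1 := (hbndL a ha).2
        have h2 := hbndR b hb
        exact Fin.lt_def.mpr (by omega)
      have hcs_val : cs.map (fun i => Stmt4Aux.val w (P.get i)) = t := by
        rw [hcs, List.map_append, hvalL, hvalR, huu, hvv, List.take_append_drop]
      have hcs_mem : ∀ x ∈ cs, x ∈ I' := by
        intro x hx
        apply hII'
        simp only [Finset.mem_filter, Finset.mem_univ, true_and]
        rcases List.mem_append.mp hx with h | h
        · left
          have hx' : (x : ℕ) ∈ isL.map Fin.val := List.mem_map_of_mem h
          rw [hmapL] at hx'
          obtain ⟨g, hg⟩ := Stmt4Aux.exists_ofFn_eq pasL hplL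
          refine Finset.mem_biUnion.mpr ⟨g, Finset.mem_univ _, ?_⟩
          rw [List.mem_toFinset, hg]
          exact hx'
        · right
          have hx' := hmemR x h
          have hplR' : pasR.length = vvr.length := by
            rw [hplR, hvvr, List.length_reverse]
          obtain ⟨g, hg⟩ := Stmt4Aux.exists_ofFn_eq pasR hplR'
          refine Finset.mem_biUnion.mpr ⟨g, Finset.mem_univ _, ?_⟩
          rw [List.mem_toFinset, hg]
          exact hx'
      have hcs_fin : cs.Sublist
          ((List.finRange P.length).filter (fun i => decide (i ∈ I'))) := by
        have h1 : cs.Sublist (List.finRange P.length) :=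
          Stmt4Aux.sorted_sublist_finRange cs hcs_pw
        have h6 := h1.filter (fun i => decide (i ∈ I'))
        have h7 : cs.filter (fun i => decide (i ∈ I')) = cs :=
          List.filter_eq_self.mpr (fun a ha => by simpa using hcs_mem a ha)
        rwa [h7] at h6
      have hfinal := hcs_fin.map (fun i => Stmt4Aux.val w (P.get i))
      rw [hcs_val] at hfinal
      have heq : evalWord (selectIdx P I') w =
          ((List.finRange P.length).filter (fun i => decide (i ∈ I'))).map
            (fun i => Stmt4Aux.val w (P.get i)) := by
        unfold evalWord selectIdx
        rw [List.map_map]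
        rfl
      rw [heq]
      exact hfinal
    · intro hT
      have h2 : (evalWord (selectIdx P I') w).Sublist (evalWord P w) := by
        unfold evalWord
        exact hsel.map _
      exact hT.trans h2
end

section
/- Let Σ be an alphabet and u ∈ Σ^+. For every α ≥ 1, every word w that contains u^α as a subword but does not contain u^{α+1} as a subword can be written as w = (∏_{i=1}^{α} ∏_{j=1}^{|u|} v_{i,j} u_j) · y, where each v_{i,j} is a word over Σ avoiding the letter u_j, and y is a word such that for some i ∈ [|u|], y ∈ (∏_{j=1}^{i−1} (Σ∖{u_j})^* u_j) · (Σ∖{u_i})^*; in particular y does not contain u as a subword. -/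
/-- `u^l`: the concatenation of `l` copies of the word `u`. -/
def wpow {α : Type*} (u : List α) (l : ℕ) : List α := (List.replicate l u).flatten

namespace Stmt8

variable {α : Type*} [DecidableEq α]

/-- Greedy remainder after matching `s` as a subword of `w`. -/
def gdrop : List α → List α → List α
  | [], w => w
  | c :: s, w => gdrop s ((w.dropWhile (fun x => x ≠ c)).tail)

lemma split_of_mem {c : α} : ∀ {w : List α}, c ∈ w →
    w = w.takeWhile (fun x => x ≠ c) ++ c :: (w.dropWhile (fun x => x ≠ c)).tail ∧
      c ∉ w.takeWhile (fun x => x ≠ c)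
  | [], h => by simp at h
  | b :: w, h => by
    by_cases hbc : b = c
    · subst hbc
      simp
    · have hc : c ∈ w := by
        rcases List.mem_cons.mp h with h' | h'
        · exact absurd h'.symm hbc
        · exact h'
      have ih := split_of_mem hc
      rw [List.takeWhile_cons_of_pos (by simpa using hbc),
        List.dropWhile_cons_of_pos (by simpa using hbc)]
      refine ⟨?_, ?_⟩
      · rw [List.cons_append]; exact congrArg (b :: ·) ih.1
      · intro hmem
        rcases List.mem_cons.mp hmem with h' | h'
        · exact hbc h'.symm
        · exact ih.2 h'

lemma sublist_tail_dropWhile {c : α} {x : List α} : ∀ {w : List α}, (c :: x).Sublist w →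
    x.Sublist ((w.dropWhile (fun b => b ≠ c)).tail)
  | [], h => by simp at h
  | b :: w, h => by
    by_cases hbc : b = c
    · subst hbc
      rw [List.dropWhile_cons_of_neg (by simp)]
      exact h.of_cons_cons
    · rw [List.dropWhile_cons_of_pos (by simpa using hbc)]
      cases h with
      | cons _ h' => exact sublist_tail_dropWhile h'
      | cons_cons _ h' => exact absurd rfl hbc

lemma gdrop_append : ∀ (s t w : List α), gdrop (s ++ t) w = gdrop t (gdrop s w)
  | [], t, w => rfl
  | c :: s, t, w => gdrop_append s t _

lemma gdrop_sublist : ∀ (s : List α) {x w : List α}, (s ++ x).Sublist w →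
    x.Sublist (gdrop s w)
  | [], _, _, h => h
  | c :: s, x, w, h => gdrop_sublist s (sublist_tail_dropWhile h)

lemma map_sublist_flatMap {β : Type*} (f : β → α) (g : β → List α) :
    ∀ l : List β, (l.map f).Sublist (l.flatMap fun b => g b ++ [f b])
  | [] => by simp
  | b :: l => by
    simp only [List.map_cons, List.flatMap_cons]
    exact (List.sublist_append_right (g b) [f b]).append (map_sublist_flatMap f g l)

lemma decomp : ∀ (s w : List α), s.Sublist w →
    ∃ v : Fin s.length → List α,
      (∀ j, s.get j ∉ v j) ∧
      w = ((List.finRange s.length).flatMap fun j => v j ++ [s.get j]) ++ gdrop s w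
  | [], w, _ => ⟨fun j => j.elim0, fun j => j.elim0, by simp [gdrop]⟩
  | c :: s, w, h => by
    have hc : c ∈ w := h.subset (List.mem_cons_self)
    obtain ⟨hw, hct⟩ := split_of_mem hc
    have hs : s.Sublist ((w.dropWhile (fun x => x ≠ c)).tail) :=
      sublist_tail_dropWhile h
    obtain ⟨v', hv', hw'⟩ := decomp s _ hs
    refine ⟨Fin.cases (w.takeWhile (fun x => x ≠ c)) v', ?_, ?_⟩
    · intro j
      refine Fin.cases ?_ ?_ j
      · simpa using hct
      · intro j'; simpa using hv' j'
    · have key : ((List.finRange (s.length + 1)).flatMap fun j : Fin (s.length + 1) =>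
          (Fin.cases (w.takeWhile (fun x => x ≠ c)) v' j : List α) ++ [(c :: s).get j]) =
          (w.takeWhile (fun x => x ≠ c) ++ [c]) ++
            ((List.finRange s.length).flatMap fun j => v' j ++ [s.get j]) := by
        rw [List.finRange_succ, List.flatMap_cons, List.flatMap_map]
        simp [Function.comp]
      show w = ((List.finRange (s.length + 1)).flatMap fun j : Fin (s.length + 1) =>
          (Fin.cases (w.takeWhile (fun x => x ≠ c)) v' j : List α) ++ [(c :: s).get j]) ++
          gdrop s ((w.dropWhile (fun x => x ≠ c)).tail)
      rw [key]
      conv_lhs => rw [hw]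
      rw [List.append_assoc, ← hw']
      simp

lemma take_finRange (m n : ℕ) (h : m ≤ n) :
    (List.finRange n).take m = (List.finRange m).map (Fin.castLE h) := by
  apply List.map_injective_iff.mpr Fin.val_injective
  rw [List.map_take, List.map_coe_finRange_eq_range, List.take_range, List.map_map]
  have : (Fin.val ∘ Fin.castLE h) = (Fin.val : Fin m → ℕ) := rfl
  rw [this, List.map_coe_finRange_eq_range, Nat.min_eq_left h]

lemma flatMap_sublist_flatMap {β : Type*} (f g : β → List α) :
    ∀ l : List β, (∀ b ∈ l, (f b).Sublist (g b)) → (l.flatMap f).Sublist (l.flatMap g)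
  | [], _ => by simp
  | b :: l, h => by
    simp only [List.flatMap_cons]
    exact (h b (List.mem_cons_self)).append
      (flatMap_sublist_flatMap f g l fun b' hb' => h b' (List.mem_cons_of_mem _ hb'))

lemma wpow_eq_flatMap (u : List α) (a : ℕ) :
    wpow u a = (List.finRange a).flatMap fun _ => u := by
  rw [List.flatMap, List.map_const', List.length_finRange, wpow]

lemma pow_sublist_flat (u : List α) (a : ℕ) (v : Fin a → Fin u.length → List α) :
    (wpow u a).Sublist ((List.finRange a).flatMap fun i =>
      (List.finRange u.length).flatMap fun j => v i j ++ [u.get j]) := by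
  rw [wpow_eq_flatMap]
  refine flatMap_sublist_flatMap _ _ _ fun i _ => ?_
  have := map_sublist_flatMap u.get (v i) (List.finRange u.length)
  simpa [List.map_get_finRange] using this

lemma decompPow (u : List α) : ∀ (a : ℕ) (w : List α), (wpow u a).Sublist w →
    ∃ v : Fin a → Fin u.length → List α,
      (∀ i j, u.get j ∉ v i j) ∧
      w = ((List.finRange a).flatMap fun i =>
            (List.finRange u.length).flatMap fun j => v i j ++ [u.get j]) ++
          gdrop (wpow u a) w
  | 0, w, _ => ⟨fun i => i.elim0, fun i => i.elim0, by simp [wpow, gdrop]⟩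
  | a + 1, w, h => by
    have hsplit : wpow u (a + 1) = u ++ wpow u a := by simp [wpow, List.replicate_succ]
    have h' : (u ++ wpow u a).Sublist w := hsplit ▸ h
    have hu1 : u.Sublist w := (List.sublist_append_left u (wpow u a)).trans h'
    obtain ⟨v0, hv0, hw0⟩ := decomp u w hu1
    have hrest : (wpow u a).Sublist (gdrop u w) := gdrop_sublist u h'
    obtain ⟨v', hv', hw'⟩ := decompPow u a (gdrop u w) hrest
    refine ⟨Fin.cases v0 v', ?_, ?_⟩
    · intro i j
      refine Fin.cases ?_ ?_ i
      · simpa using hv0 j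
      · intro i'; simpa using hv' i' j
    · have hgd : gdrop (wpow u (a + 1)) w = gdrop (wpow u a) (gdrop u w) := by
        rw [hsplit, gdrop_append]
      have key : ((List.finRange (a + 1)).flatMap fun i : Fin (a + 1) =>
          (List.finRange u.length).flatMap fun j =>
            (Fin.cases v0 v' i : Fin u.length → List α) j ++ [u.get j]) =
          ((List.finRange u.length).flatMap fun j => v0 j ++ [u.get j]) ++
          ((List.finRange a).flatMap fun i =>
            (List.finRange u.length).flatMap fun j => v' i j ++ [u.get j]) := by
        rw [List.finRange_succ, List.flatMap_cons, List.flatMap_map]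
        simp [Function.comp]
      show w = ((List.finRange (a + 1)).flatMap fun i : Fin (a + 1) =>
          (List.finRange u.length).flatMap fun j =>
            (Fin.cases v0 v' i : Fin u.length → List α) j ++ [u.get j]) ++
          gdrop (wpow u (a + 1)) w
      rw [key, hgd, List.append_assoc, ← hw']
      exact hw0

lemma flatMap_finRange_cast {n m : ℕ} (h : n = m) (f : Fin n → List α) :
    (List.finRange n).flatMap f =
      (List.finRange m).flatMap (fun j => f (Fin.cast h.symm j)) := by
  subst h; rfl

lemma sublist_flat (s : List α) (v : Fin s.length → List α) :
    s.Sublist ((List.finRange s.length).flatMap fun j => v j ++ [s.get j]) := by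
  have := map_sublist_flatMap s.get v (List.finRange s.length)
  simpa [List.map_get_finRange] using this

lemma tail_decomp (u : List α) (hu : u ≠ []) (y : List α) (hy : ¬ u.Sublist y) :
    ∃ (i : Fin u.length) (z : Fin u.length → List α),
      (∀ j : Fin u.length, j ≤ i → u.get j ∉ z j) ∧
      y = (((List.finRange u.length).take i.val).flatMap fun j => z j ++ [u.get j])
            ++ z i := by
  classical
  set P : ℕ → Prop := fun n => (u.take n).Sublist y with hPdef
  have hP0 : P 0 := by simp [hPdef]
  set i := Nat.findGreatest P u.length with hidef
  have hile : i ≤ u.length := Nat.findGreatest_le _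
  have hPi : P i := Nat.findGreatest_spec (Nat.zero_le _) hP0
  have hilt : i < u.length := by
    rcases lt_or_eq_of_le hile with h' | h'
    · exact h'
    · exfalso; apply hy
      have := hPi
      rw [hPdef] at this
      simpa [h'] using this
  obtain ⟨v, hv, hyd⟩ := decomp (u.take i) y hPi
  have hlen : (u.take i).length = i := by
    simp [List.length_take, Nat.min_eq_left hile]
  have hnotmem : u.get ⟨i, hilt⟩ ∉ gdrop (u.take i) y := by
    intro hmem
    have h1 := sublist_flat (u.take i) v
    have h2 : [u.get ⟨i, hilt⟩].Sublist (gdrop (u.take i) y) := by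
      simpa using hmem
    have h3 : (u.take i ++ [u.get ⟨i, hilt⟩]).Sublist y := by
      rw [hyd]; exact h1.append h2
    have h4 : (u.take (i + 1)).Sublist y := by
      rw [List.take_succ]
      simpa [List.getElem?_eq_getElem hilt] using h3
    exact Nat.findGreatest_is_greatest (k := i + 1) (hidef ▸ i.lt_succ_self)
      (by omega) h4
  refine ⟨⟨i, hilt⟩, fun j =>
    if h : j.val < i then v (Fin.cast hlen.symm ⟨j.val, h⟩) else gdrop (u.take i) y,
    ?_, ?_⟩
  · intro j hj
    by_cases h : j.val < i
    · simp only [dif_pos h]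
      intro hmem
      have := hv (Fin.cast hlen.symm ⟨j.val, h⟩)
      apply this
      have hget : (u.take i).get (Fin.cast hlen.symm ⟨j.val, h⟩) = u.get j := by
        simp [List.get_eq_getElem, List.getElem_take]
      rwa [hget]
    · have h2 : (⟨i, hilt⟩ : Fin u.length) ≤ j := by
        rw [Fin.le_def]
        exact Nat.le_of_not_lt h
      have hji : j = ⟨i, hilt⟩ := (le_antisymm h2 hj).symm
      subst hji
      simpa [dif_neg h] using hnotmem
  · conv_lhs => rw [hyd, flatMap_finRange_cast hlen]
    rw [take_finRange i u.length hile, List.flatMap_map]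
    congr 1
    · congr 1
      funext x
      have hx : (Fin.castLE hile x).val < i := x.isLt
      beta_reduce
      rw [dif_pos hx]
      congr 1
      simp [List.get_eq_getElem, List.getElem_take]
    · simp

end Stmt8

theorem stmt_8 {α : Type*} (u : List α) (hu : u ≠ []) (a : ℕ) (ha : 1 ≤ a)
    (w : List α) (h1 : (wpow u a).Sublist w) (h2 : ¬ (wpow u (a + 1)).Sublist w) :
    ∃ (v : Fin a → Fin u.length → List α) (y : List α),
      w = ((List.finRange a).flatMap fun i =>
            (List.finRange u.length).flatMap fun j => v i j ++ [u.get j]) ++ y ∧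
      (∀ i j, u.get j ∉ v i j) ∧
      (∃ (i : Fin u.length) (z : Fin u.length → List α),
        (∀ j : Fin u.length, j ≤ i → u.get j ∉ z j) ∧
        y = (((List.finRange u.length).take i.val).flatMap fun j => z j ++ [u.get j])
              ++ z i) ∧
      ¬ u.Sublist y := by
  classical
  obtain ⟨v, hv, hw⟩ := Stmt8.decompPow u a w h1
  have hnsub : ¬ u.Sublist (Stmt8.gdrop (wpow u a) w) := by
    intro hsub
    apply h2
    have hsplit : wpow u (a + 1) = wpow u a ++ u := by
      simp [wpow, List.replicate_succ']
    rw [hsplit, hw]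
    exact (Stmt8.pow_sublist_flat u a v).append hsub
  obtain ⟨i, z, hz, hyz⟩ := Stmt8.tail_decomp u hu _ hnsub
  exact ⟨v, Stmt8.gdrop (wpow u a) w, hw, hv, ⟨i, z, hz, hyz⟩, hnsub⟩
end

section
/- Let Σ be an alphabet and u ∈ Σ^+ a word whose letters are pairwise distinct, with |u| ≥ 1. Suppose z is a word containing u^α as a subword but not u^{α+1} as a subword (α ≥ 1), written as z = (∏_{i=1}^{α} ∏_{j=1}^{|u|} v_{i,j} u_j) y with each v_{i,j} avoiding the letter u_j and y not containing u as a subword. If z contains u as a factor, then there exists β ∈ [α] such that the block ∏_{j=1}^{|u|} v_{β,j} u_j already contains u as a factor. -/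
/-- Auxiliary: if every block in `L` ends with the last letter of `u`, `u` is not a
sublist of `y`, and `u` is a factor of `L.flatten ++ y`, then `u` is a factor of a block. -/
lemma aux_block {α : Type*} (u : List α) (hu : u ≠ []) (hnd : u.Nodup)
    (ul : α) (hul : ul = u.getLast hu) :
    ∀ (L : List (List α)) (y : List α),
      (∀ b ∈ L, ∃ c, b = c ++ [ul]) → ¬ u.Sublist y →
      u <:+: (L.flatten ++ y) → ∃ b ∈ L, u <:+: b := by
  intro L
  induction L with
  | nil =>
    intro y _ hy hinf
    simp only [List.flatten_nil, List.nil_append] at hinf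
    exact absurd hinf.sublist hy
  | cons b L ih =>
    intro y hL hy hinf
    obtain ⟨c, hc⟩ := hL b (List.mem_cons_self)
    obtain ⟨s, t, hst⟩ := hinf
    simp only [List.flatten_cons, List.append_assoc] at hst
    set w := L.flatten ++ y with hw
    -- hst : s ++ (u ++ t) = b ++ w
    by_cases h1 : s.length + u.length ≤ b.length
    · -- occurrence inside b
      refine ⟨b, List.mem_cons_self, ?_⟩
      have htake := congrArg (List.take b.length) hst
      rw [List.take_append, List.take_append,
        List.take_left,
        List.take_of_length_le (show s.length ≤ b.length by omega),
        List.take_of_length_le (show u.length ≤ b.length - s.length by omega)] at htake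
      exact ⟨s, List.take (b.length - s.length - u.length) t, by
        rw [List.append_assoc]; exact htake⟩
    · by_cases h2 : b.length ≤ s.length
      · -- occurrence inside w
        have hdrop := congrArg (List.drop b.length) hst
        rw [List.drop_append, List.drop_append,
          List.drop_left] at hdrop
        have e0 : b.length - s.length = 0 := Nat.sub_eq_zero_of_le h2
        simp only [e0, Nat.zero_sub, List.drop_zero] at hdrop
        have hin : u <:+: w := ⟨s.drop b.length, t, by rw [List.append_assoc]; exact hdrop⟩
        obtain ⟨b', hb', hub'⟩ := ih y (fun b hb => hL b (List.mem_cons_of_mem _ hb)) hy hin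
        exact ⟨b', List.mem_cons_of_mem _ hb', hub'⟩
      · -- straddling: contradiction with Nodup
        exfalso
        push_neg at h1 h2
        subst hc
        simp only [List.length_append, List.length_cons, List.length_nil] at h1 h2
        -- h2 : s.length < c.length + 0 + 1, h1 : c.length + 0 + 1 < s.length + u.length
        have hun : 0 < u.length := List.length_pos_iff.mpr hu
        have hi : c.length < ((c ++ [ul]) ++ w).length := by
          simp only [List.length_append, List.length_cons, List.length_nil]; omega
        have hi' : c.length < ((s ++ u) ++ t).length := by
          simp only [List.length_append]; omega
        have hst' : (s ++ u) ++ t = (c ++ [ul]) ++ w := by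
          rw [List.append_assoc]; exact hst
        have key : ((s ++ u) ++ t)[c.length]'hi' = ((c ++ [ul]) ++ w)[c.length]'hi := by
          congr 1
        have hlt : c.length - s.length < u.length := by omega
        have lhs : ((s ++ u) ++ t)[c.length]'hi' = u[c.length - s.length]'hlt := by
          rw [List.getElem_append_left (by simp only [List.length_append]; omega),
            List.getElem_append_right (by omega)]
        have rhs : ((c ++ [ul]) ++ w)[c.length]'hi = ul := by
          rw [List.getElem_append_left (by
            simp only [List.length_append, List.length_cons, List.length_nil]; omega)]
          exact List.getElem_concat_length (l := c) (a := ul) (i := c.length) rfl _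
        have hule : ul = u[u.length - 1]'(by omega) := by
          rw [hul, List.getLast_eq_getElem]
        rw [lhs, rhs, hule] at key
        have := (hnd.getElem_inj_iff).mp key
        omega

theorem stmt_9 {α : Type*} (u : List α) (hu : u ≠ []) (hnd : u.Nodup)
    (a : ℕ) (ha : 1 ≤ a)
    (v : Fin a → Fin u.length → List α) (y : List α)
    (hv : ∀ i j, u.get j ∉ v i j) (hy : ¬ u.Sublist y)
    (z : List α)
    (hz : z = ((List.finRange a).flatMap fun i =>
            (List.finRange u.length).flatMap fun j => v i j ++ [u.get j]) ++ y)
    (h1 : (wpow u a).Sublist z) (h2 : ¬ (wpow u (a + 1)).Sublist z)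
    (hfac : u <:+: z) :
    ∃ β : Fin a,
      u <:+: ((List.finRange u.length).flatMap fun j => v β j ++ [u.get j]) := by
  set ul := u.getLast hu with hul
  set B : Fin a → List α := fun i =>
    (List.finRange u.length).flatMap fun j => v i j ++ [u.get j] with hB
  have hflat : ((List.finRange a).flatMap fun i => B i) = ((List.finRange a).map B).flatten := by
    rw [List.flatMap]
  have hn : 0 < u.length := List.length_pos_iff.mpr hu
  have hfr : List.finRange u.length ≠ [] := by
    intro h
    have := congrArg List.length h
    simp only [List.length_finRange, List.length_nil] at this
    omega
  have hends : ∀ b ∈ (List.finRange a).map B, ∃ c, b = c ++ [ul] := by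
    intro b hb
    obtain ⟨i, _, rfl⟩ := List.mem_map.mp hb
    set jl := (List.finRange u.length).getLast hfr with hjl
    have hjv : jl = ⟨u.length - 1, by omega⟩ := by
      rw [hjl, List.getLast_eq_getElem, List.getElem_finRange]
      apply Fin.ext
      simp
    have hget : u.get jl = ul := by
      rw [hjv, hul]
      simp [List.get_eq_getElem, List.getLast_eq_getElem]
    refine ⟨((List.finRange u.length).dropLast.flatMap fun j => v i j ++ [u.get j]) ++
      v i jl, ?_⟩
    have hsplit : List.finRange u.length = (List.finRange u.length).dropLast ++ [jl] :=
      (List.dropLast_append_getLast hfr).symm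
    calc B i = ((List.finRange u.length).dropLast ++ [jl]).flatMap
          (fun j => v i j ++ [u.get j]) := by
            simp only [hB]
            conv_lhs => rw [hsplit]
      _ = _ := by
          rw [List.flatMap_append]
          simp only [List.flatMap_cons, List.flatMap_nil, List.append_nil, hget,
            List.append_assoc]
  have hinf : u <:+: (((List.finRange a).map B).flatten ++ y) := by
    rw [← hflat]; rw [hz] at hfac; exact hfac
  obtain ⟨b, hb, hub⟩ := aux_block u hu hnd ul hul ((List.finRange a).map B) y hends hy hinf
  obtain ⟨β, _, rfl⟩ := List.mem_map.mp hb
  exact ⟨β, hub⟩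
end

section
/- Let Σ be an alphabet, l ≥ 1, k ≥ 1, and u_1,…,u_k ∈ Σ^+ such that for each i the letters of u_i are pairwise distinct. Then ⋃_{q_1,…,q_k ∈ {1,l}} L^{(l)}_{(u_1,q_1)} ⋯ L^{(l)}_{(u_k,q_k)} = ⋃_{α ∈ [l]^k} ( R_l^α(u_1,…,u_k) ∩ S_l^α(u_1,…,u_k) ). -/
/-- Concatenation of two languages. -/
def lconc {α : Type*} (L K : Set (List α)) : Set (List α) :=
  {w | ∃ x ∈ L, ∃ y ∈ K, w = x ++ y}

/-- Concatenation of a list of languages. -/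
def chainConc {α : Type*} (Ls : List (Set (List α))) : Set (List α) :=
  Ls.foldr lconc {[]}

/-- `L^{(l)}_{(u,q)}`: words containing `u` as a factor if `q < l`,
words containing `u^l` as a subword if `q = l`. -/
def Lul {α : Type*} (u : List α) (l q : ℕ) : Set (List α) :=
  if q < l then {w | u <:+: w} else {w | (wpow u l).Sublist w}

/-- The word `u₁^{a₁} ⋯ u_k^{a_k}`. -/
def bigSub {α : Type*} {k : ℕ} (u : Fin k → List α) (a : Fin k → ℕ) : List α :=
  (List.finRange k).flatMap fun i => wpow (u i) (a i)


open List

namespace Aux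
variable {α : Type*}

/-- listified `u₁^{a₁}⋯`  -/
def bigSubL : List (List α) → List ℕ → List α
  | [], _ => []
  | _ :: _, [] => []
  | v :: us, a :: as => wpow v a ++ bigSubL us as

/-- bump the j-th exponent -/
def bumpL : ℕ → List ℕ → List ℕ
  | _, [] => []
  | 0, a :: as => (a+1) :: as
  | j+1, a :: as => a :: bumpL j as

/-- lax block decomposition witnessing exponents (with factor certificates below `l`) -/
def WL (l : ℕ) : List (List α) → List ℕ → List α → Prop
  | [], _, _ => True
  | _ :: _, [], _ => False
  | v :: us, a :: as, w =>
      ∃ y w', w = y ++ w' ∧ wpow v a <+ y ∧ (a < l → v <:+: y) ∧ WL l us as w'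

theorem wpow_succ (u : List α) (a : ℕ) : wpow u (a+1) = u ++ wpow u a := by
  simp [wpow, List.replicate_succ]

theorem wpow_succ' (u : List α) (a : ℕ) : wpow u (a+1) = wpow u a ++ u := by
  simp [wpow, List.replicate_succ']

theorem wpow_zero (u : List α) : wpow u 0 = [] := rfl

theorem wpow_one (u : List α) : wpow u 1 = u := by simp [wpow]

theorem wpow_mono (u : List α) {a b : ℕ} (h : a ≤ b) : wpow u a <+ wpow u b := by
  induction b with
  | zero => simpa [Nat.le_zero.mp h] using Sublist.refl _
  | succ b ih =>
      rcases Nat.lt_or_ge a (b+1) with h' | h'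
      · exact ((ih (Nat.lt_succ_iff.mp h')).trans (by rw [wpow_succ']; exact sublist_append_left _ _))
      · have : a = b + 1 := le_antisymm h h'
        subst this; exact Sublist.refl _

theorem wpow_ne_nil {u : List α} (hu : u ≠ []) {a : ℕ} (ha : 1 ≤ a) : wpow u a ≠ [] := by
  obtain ⟨b, rfl⟩ := Nat.exists_eq_add_of_le ha
  rw [Nat.add_comm, wpow_succ]
  simp [hu]

theorem wpow_getLast? {u : List α} (hu : u ≠ []) {a : ℕ} (ha : 1 ≤ a) :
    (wpow u a).getLast? = u.getLast? := by
  obtain ⟨b, rfl⟩ := Nat.exists_eq_add_of_le ha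
  rw [Nat.add_comm, wpow_succ', List.getLast?_append]
  have : u.getLast?.isSome := by rw [List.getLast?_isSome]; exact hu
  exact Option.or_of_isSome this

theorem wpow_head? {u : List α} (hu : u ≠ []) {a : ℕ} (ha : 1 ≤ a) (T : List α) :
    (wpow u a ++ T).head? = u.head? := by
  obtain ⟨b, rfl⟩ := Nat.exists_eq_add_of_le ha
  rw [Nat.add_comm, wpow_succ, List.append_assoc, List.head?_append]
  rcases u with _ | ⟨c, u⟩
  · exact absurd rfl hu
  · simp

/-- drop of a longer index is a sublist of drop of a shorter one -/
theorem drop_sublist_drop (W : List α) {a b : ℕ} (h : a ≤ b) : W.drop b <+ W.drop a := by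
  obtain ⟨c, rfl⟩ := Nat.exists_eq_add_of_le h
  rw [← List.drop_drop]
  exact (List.drop_suffix _ _).sublist

theorem take_sublist_take (W : List α) {a b : ℕ} (h : a ≤ b) : W.take a <+ W.take b := by
  obtain ⟨c, rfl⟩ := Nat.exists_eq_add_of_le h
  rw [List.take_add]
  exact sublist_append_left _ _

open Classical in
/-- minimal prefix length of `W` containing `x` as a sublist -/
noncomputable def minE (x W : List α) (h : x <+ W) : ℕ :=
  Nat.find (⟨W.length, by simpa using h⟩ : ∃ m, x <+ W.take m)

open Classical in
theorem minE_spec (x W : List α) (h : x <+ W) : x <+ W.take (minE x W h) :=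
  Nat.find_spec (⟨W.length, by simpa using h⟩ : ∃ m, x <+ W.take m)

open Classical in
theorem minE_min {x W : List α} (h : x <+ W) {m : ℕ} (hm : x <+ W.take m) :
    minE x W h ≤ m := by
  unfold minE; exact Nat.find_le hm

theorem minE_not {x W : List α} (h : x <+ W) {m : ℕ} (hm : m < minE x W h) :
    ¬ x <+ W.take m := fun hc => absurd (minE_min h hc) (by omega)

theorem minE_le_length (x W : List α) (h : x <+ W) : minE x W h ≤ W.length :=
  minE_min h (by simpa using h)

/-- greedy exchange: the remainder embeds after the leftmost embedding of the head -/
theorem minE_greedy {x z W : List α} (hxz : x ++ z <+ W) (h : x <+ W) :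
    z <+ W.drop (minE x W h) := by
  rcases append_sublist_iff.mp hxz with ⟨W₁, W₂, hW, h₁, h₂⟩
  have hmin : minE x W h ≤ W₁.length := by
    refine minE_min h ?_
    rw [hW, List.take_left]
    exact h₁
  have hd : W₂ <+ W.drop W₁.length := by
    rw [hW, List.drop_left]
  exact (h₂.trans hd).trans (drop_sublist_drop _ hmin)

theorem sublist_snoc_elim {x A : List α} {c : α} (h : x <+ A ++ [c]) :
    x <+ A ∨ x.getLast? = some c := by
  rcases sublist_append_iff.mp h with ⟨x₁, x₂, rfl, h₁, h₂⟩
  rcases (List.sublist_singleton.mp h₂) with rfl | rfl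
  · left; simpa using h₁
  · right; simp

/-- if the minimal embedding end lies strictly inside a factor block whose content is `u`,
and the demand ends with the last letter of `u`, then by nodup it ends exactly at the
end of the block -/
theorem minE_factor {u x W Q : List α} (hu : u ≠ []) (hnd : u.Nodup)
    (hlast : x.getLast? = u.getLast?) (hsub : x <+ W)
    (hW : W.take (Q.length + u.length) = Q ++ u)
    (h1 : Q.length < minE x W hsub) (h2 : minE x W hsub ≤ Q.length + u.length) :
    minE x W hsub = Q.length + u.length := by
  by_contra hne
  obtain ⟨e, he⟩ : ∃ e, minE x W hsub = e := ⟨_, rfl⟩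
  rw [he] at h1 h2 hne
  have h2' : e < Q.length + u.length := lt_of_le_of_ne h2 hne
  have heW : e ≤ W.length := he ▸ minE_le_length x W hsub
  have hun : 0 < u.length := List.length_pos_iff.mpr hu
  have hgete : e - 1 < W.length := by omega
  have hm1 : e - 1 + 1 = e := by omega
  have hx : x <+ W.take (e-1) ++ [W[e-1]] := by
    have h0 : x <+ W.take e := by rw [← he]; exact minE_spec x W hsub
    rw [← hm1, List.take_succ, List.getElem?_eq_getElem hgete] at h0
    simpa using h0
  rcases sublist_snoc_elim hx with h' | h'
  · exact minE_not hsub (show e - 1 < minE x W hsub by omega) h'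
  have hidx : e - 1 < (W.take (Q.length + u.length)).length := by
    simp only [List.length_take, lt_min_iff]
    omega
  have hidx2 : e - 1 < (Q ++ u).length := by rw [← hW]; exact hidx
  have h3 : (W.take (Q.length + u.length))[e-1]'hidx = (Q ++ u)[e-1]'hidx2 :=
    List.getElem_of_eq hW _
  rw [List.getElem_take] at h3
  have hidx3 : e - 1 - Q.length < u.length := by
    simp only [List.length_append] at hidx2; omega
  have hWe : W[e-1]'hgete = u[e-1-Q.length]'hidx3 := by
    rw [h3, List.getElem_append_right (by omega)]
  have hul : u.getLast? = some (u[u.length - 1]'(by omega)) := by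
    rw [List.getLast?_eq_getLast hu, List.getLast_eq_getElem]
  rw [hlast, hul, hWe] at h'
  have heq : u[e-1-Q.length]'hidx3 = u[u.length - 1]'(by omega) :=
    (Option.some_injective _ h').symm
  have := (hnd.getElem_inj_iff).mp heq
  omega

/-- head trick : a demand starting with the head of `u` cannot use a proper suffix of `u` -/
theorem head_trick {T τ V : List α} (h : T <+ τ ++ V) (hhd : ∀ c, T.head? = some c → c ∉ τ) :
    T <+ V := by
  rcases sublist_append_iff.mp h with ⟨x₁, x₂, rfl, h₁, h₂⟩
  cases x₁ with
  | nil => simpa using h₂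
  | cons c x₁ =>
      exact absurd (h₁.mem (List.mem_cons_self)) (hhd c rfl)

theorem head_notin_proper_suffix {u : List α} (hu : u ≠ []) (hnd : u.Nodup) {d : ℕ}
    (hd : 0 < d) {c : α} (hc : u.head? = some c) : c ∉ u.drop d := by
  intro hmem
  rcases List.mem_iff_getElem.mp hmem with ⟨i, hi, hgi⟩
  have hgi' : u[d + i]'(by simpa using (by simp at hi; omega : d + i < u.length)) = c := by
    rw [← List.getElem_drop]; exact hgi
  have hc0 : u[0]'(by cases u with | nil => exact absurd rfl hu | cons a u => simp) = c := by
    cases u with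
    | nil => exact absurd rfl hu
    | cons a u => simpa using hc
  have : d + i = 0 := (hnd.getElem_inj_iff).mp (hgi'.trans hc0.symm)
  omega

theorem WL_sub {l : ℕ} : ∀ {us : List (List α)} {as : List ℕ} {w : List α},
    WL l us as w → bigSubL us as <+ w
  | [], as, _, _ => by cases as <;> simp [bigSubL]
  | _ :: _, [], _, h => absurd h (by simp [WL])
  | v :: us, a :: as, w, h => by
      obtain ⟨y, w', rfl, h1, _, h3⟩ := h
      exact Sublist.append h1 (WL_sub h3)

theorem WL_lift {l : ℕ} : ∀ {us : List (List α)} {as : List ℕ} {w : List α} (x : List α),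
    WL l us as w → WL l us as (x ++ w)
  | [], _, _, _, _ => trivial
  | _ :: _, [], _, _, h => absurd h (by simp [WL])
  | v :: us, a :: as, w, x, h => by
      obtain ⟨y, w', rfl, h1, h2, h3⟩ := h
      exact ⟨x ++ y, w', by simp, h1.trans (sublist_append_right _ _),
        fun hal => (h2 hal).trans (List.suffix_append x y).isInfix, h3⟩

/-- suffix-comparability is preserved by dropping from the current word -/
theorem rel_drop {Wcur y w₂ : List α}
    (h : (∃ g, Wcur = g ++ (y ++ w₂)) ∨ (∃ h, y ++ w₂ = h ++ Wcur)) (e : ℕ) :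
    (∃ g', Wcur.drop e = g' ++ w₂) ∨ (∃ h', w₂ = h' ++ Wcur.drop e) := by
  have key : ∀ (A : List α), (∃ g', (A ++ w₂).drop e = g' ++ w₂) ∨
      (∃ h', w₂ = h' ++ (A ++ w₂).drop e) := by
    intro A
    rcases le_or_gt e A.length with h' | h'
    · left
      exact ⟨A.drop e, List.drop_append_of_le_length h'⟩
    · right
      rw [List.drop_append, List.drop_eq_nil_of_le h'.le, List.nil_append]
      exact ⟨w₂.take (e - A.length), (List.take_append_drop _ _).symm⟩
  rcases h with ⟨g, rfl⟩ | ⟨h, hh⟩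
  · rw [← List.append_assoc]
    exact key _
  · -- y ++ w₂ = h ++ Wcur
    rcases le_or_gt h.length (y.length) with h' | h'
    · -- Wcur = y.drop |h| ++ w₂
      have : Wcur = y.drop h.length ++ w₂ := by
        have h2 := congrArg (List.drop h.length) hh
        rw [List.drop_append_of_le_length h', List.drop_left] at h2
        exact h2.symm
      rw [this]
      exact key _
    · -- Wcur is a suffix of w₂
      have : Wcur = w₂.drop (h.length - y.length) := by
        have h2 := congrArg (List.drop h.length) hh
        rw [List.drop_left, List.drop_append,
          List.drop_eq_nil_of_le h'.le, List.nil_append] at h2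
        exact h2.symm
      right
      rw [this, List.drop_drop]
      exact ⟨w₂.take (h.length - y.length + e), (List.take_append_drop _ _).symm⟩

theorem bumpL_length : ∀ (j : ℕ) (as : List ℕ), (bumpL j as).length = as.length
  | j, [] => by cases j <;> rfl
  | 0, _ :: _ => rfl
  | j+1, a :: as => by simp [bumpL, bumpL_length j as]

theorem bigSubL_cons (v : List α) (us : List (List α)) (a : ℕ) (as : List ℕ) :
    bigSubL (v :: us) (a :: as) = wpow v a ++ bigSubL us as := rfl

theorem post {l : ℕ} (hl : 1 ≤ l) :
    ∀ (us : List (List α)) (as : List ℕ) (wOld Wcur : List α),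
    (∀ v ∈ us, v ≠ [] ∧ v.Nodup) →
    (∀ b ∈ as, 1 ≤ b ∧ b ≤ l) →
    as.length = us.length →
    WL l us as wOld →
    bigSubL us as <+ Wcur →
    ((∃ g, Wcur = g ++ wOld) ∨ (∃ h, wOld = h ++ Wcur)) →
    (∃ ds, ds.length = us.length ∧ (∀ d ∈ ds, 1 ≤ d ∧ d ≤ l) ∧
        as.sum ≤ ds.sum ∧ WL l us ds Wcur) ∨
    (∃ ds, ds.length = us.length ∧ (∀ d ∈ ds, 1 ≤ d ∧ d ≤ l) ∧
        as.sum + 1 ≤ ds.sum ∧ WL l us ds wOld) := by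
  intro us
  induction us with
  | nil =>
      intro as wOld Wcur _ _ hlen _ _ _
      have has : as = [] := List.length_eq_zero_iff.mp (by simpa using hlen)
      subst has
      exact Or.inl ⟨[], rfl, by simp, by simp, trivial⟩
  | cons u us' IH =>
      intro as wOld Wcur hus hbs hlen hWL hdem hrel
      rcases as with _ | ⟨a, as'⟩
      · exact absurd hWL (by simp [WL])
      obtain ⟨y, w₂, rfl, h1, h2, h3⟩ := hWL
      have hu : u ≠ [] ∧ u.Nodup := hus u (List.mem_cons_self)
      have hus' : ∀ v ∈ us', v ≠ [] ∧ v.Nodup := fun v hv => hus v (List.mem_cons_of_mem _ hv)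
      have hbs' : ∀ b ∈ as', 1 ≤ b ∧ b ≤ l := fun b hb => hbs b (List.mem_cons_of_mem _ hb)
      have ha : 1 ≤ a ∧ a ≤ l := hbs a (List.mem_cons_self)
      have hlen' : as'.length = us'.length := by simpa using hlen
      set R := bigSubL us' as' with hR
      rw [bigSubL_cons] at hdem
      have hsubhead : wpow u a <+ Wcur := (sublist_append_left _ _).trans hdem
      have hRw₂ : R <+ w₂ := WL_sub h3
      -- shared continuation when the occurrence of `u` is intact in `Wcur`
      have go : ∀ Q sfx2, Wcur = Q ++ u ++ (sfx2 ++ w₂) →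
          (∃ ds, ds.length = us'.length + 1 ∧ (∀ d ∈ ds, 1 ≤ d ∧ d ≤ l) ∧
              (a :: as').sum ≤ ds.sum ∧ WL l (u :: us') ds Wcur) ∨
          (∃ ds, ds.length = us'.length + 1 ∧ (∀ d ∈ ds, 1 ≤ d ∧ d ≤ l) ∧
              (a :: as').sum + 1 ≤ ds.sum ∧ WL l (u :: us') ds (y ++ w₂)) := by
        intro Q sfx2 hQZ
        set e := minE (wpow u a) Wcur hsubhead with he
        have hgreedy : R <+ Wcur.drop e := minE_greedy hdem hsubhead
        have htakeQu : Wcur.take (Q.length + u.length) = Q ++ u := by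
          rw [hQZ, show Q ++ u ++ (sfx2 ++ w₂) = (Q ++ u) ++ (sfx2 ++ w₂) from rfl]
          exact List.take_left' (by simp)
        by_cases hcase : e ≤ Q.length + u.length
        · -- block is Q ++ u, rest demand from the old suffix
          have hcopies : wpow u a <+ Q ++ u := by
            rw [← htakeQu]
            exact (minE_spec _ _ hsubhead).trans (take_sublist_take Wcur hcase)
          have hrec := IH as' w₂ (sfx2 ++ w₂) hus' hbs' hlen' h3
            (hRw₂.trans (sublist_append_right _ _)) (Or.inl ⟨sfx2, rfl⟩)
          rcases hrec with ⟨ds', hdl, hdb, hds, hWL'⟩ | ⟨ds', hdl, hdb, hds, hWL'⟩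
          · refine Or.inl ⟨a :: ds', by simp [hdl], ?_, ?_, ?_⟩
            · intro d hd; rcases List.mem_cons.mp hd with rfl | hd
              · exact ha
              · exact hdb d hd
            · simp only [List.sum_cons]; omega
            · exact ⟨Q ++ u, sfx2 ++ w₂, by rw [hQZ, List.append_assoc], hcopies,
                fun _ => ⟨Q, [], by simp⟩, hWL'⟩
          · refine Or.inr ⟨a :: ds', by simp [hdl], ?_, ?_, ?_⟩
            · intro d hd; rcases List.mem_cons.mp hd with rfl | hd
              · exact ha
              · exact hdb d hd
            · simp only [List.sum_cons]; omega
            · exact ⟨y, w₂, rfl, h1, h2, hWL'⟩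
        · -- block is Wcur.take e (factor inside), greedy remainder
          push_neg at hcase
          have hsplit : Wcur.take e = (Q ++ u) ++
              (Wcur.drop (Q.length + u.length)).take (e - (Q.length + u.length)) := by
            rw [← htakeQu, ← List.take_add]
            congr 1
            omega
          have hrec := IH as' w₂ (Wcur.drop e) hus' hbs' hlen' h3 hgreedy
            (rel_drop (y := Q ++ u ++ sfx2) (w₂ := w₂)
              (Or.inl ⟨[], by rw [hQZ]; simp⟩) e)
          rcases hrec with ⟨ds', hdl, hdb, hds, hWL'⟩ | ⟨ds', hdl, hdb, hds, hWL'⟩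
          · refine Or.inl ⟨a :: ds', by simp [hdl], ?_, ?_, ?_⟩
            · intro d hd; rcases List.mem_cons.mp hd with rfl | hd
              · exact ha
              · exact hdb d hd
            · simp only [List.sum_cons]; omega
            · exact ⟨Wcur.take e, Wcur.drop e, (List.take_append_drop _ _).symm,
                minE_spec _ _ hsubhead,
                fun _ => ⟨Q, _, by rw [hsplit, List.append_assoc]⟩, hWL'⟩
          · refine Or.inr ⟨a :: ds', by simp [hdl], ?_, ?_, ?_⟩
            · intro d hd; rcases List.mem_cons.mp hd with rfl | hd
              · exact ha
              · exact hdb d hd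
            · simp only [List.sum_cons]; omega
            · exact ⟨y, w₂, rfl, h1, h2, hWL'⟩
      by_cases hal : a < l
      · -- factor certificate available
        obtain ⟨p, sfx, hy⟩ := h2 hal
        rcases hrel with ⟨g, hWc⟩ | ⟨h, hWO⟩
        · -- Wcur = g ++ wOld
          exact go (g ++ p) sfx (by rw [hWc, ← hy]; simp)
        · -- wOld = h ++ Wcur
          rcases le_or_gt h.length p.length with hhp | hhp
          · -- occurrence intact
            refine go (p.drop h.length) sfx ?_
            have h4 := congrArg (List.drop h.length) hWO
            rw [List.drop_left] at h4
            rw [← h4, ← hy]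
            simp [List.drop_append_of_le_length, hhp]
          · -- occurrence compromised: rebuild inside the old word
            set V := sfx ++ w₂ with hV
            set PU := p ++ u with hPU
            set σ := h.length - (p.length + u.length) with hσ
            have hwOldV : y ++ w₂ = PU ++ V := by rw [← hy, hPU, hV]; simp
            have h4 : List.drop h.length (PU ++ V) = Wcur := by
              have h5 := congrArg (List.drop h.length) hWO
              rw [List.drop_left] at h5
              rw [← hwOldV]
              exact h5
            have hPUlen : PU.length = p.length + u.length := by rw [hPU]; simp
            have hT : wpow u a ++ R <+ V.drop σ := by
              rcases le_or_gt (p.length + u.length) h.length with hbig | hsmall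
              · -- Wcur is a suffix of V
                have hWV : Wcur = V.drop σ := by
                  rw [← h4, List.drop_append,
                    List.drop_eq_nil_of_le (by omega), List.nil_append, hPUlen]
                exact hWV ▸ hdem
              · -- τ-case: use the head trick
                have hσ0 : σ = 0 := by omega
                have h5 : PU.drop h.length = u.drop (h.length - p.length) := by
                  rw [hPU, List.drop_append,
                    List.drop_eq_nil_of_le hhp.le, List.nil_append]
                have hWV : Wcur = u.drop (h.length - p.length) ++ V := by
                  rw [← h4, List.drop_append_of_le_length (by omega), h5]
                rw [hσ0, List.drop_zero]
                refine head_trick (hWV ▸ hdem) ?_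
                intro c hc
                rw [wpow_head? hu.1 ha.1] at hc
                exact head_notin_proper_suffix hu.1 hu.2 (by omega) hc
            have hsubhead' : wpow u a <+ V.drop σ := (sublist_append_left _ _).trans hT
            set e' := minE (wpow u a) (V.drop σ) hsubhead' with he'
            have hgr : R <+ V.drop (σ + e') := by
              have := minE_greedy hT hsubhead'
              rwa [List.drop_drop] at this
            have hcopies : wpow u (a+1) <+ u ++ V.take (σ + e') := by
              rw [wpow_succ]
              refine Sublist.append (Sublist.refl u) ?_
              have h5 : wpow u a <+ (V.drop σ).take e' := minE_spec _ _ hsubhead'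
              have h6 : V.take (σ + e') = V.take σ ++ (V.drop σ).take e' := List.take_add (l := V) (i := σ) (j := e')
              rw [h6]
              exact h5.trans (sublist_append_right _ _)
            have hrec := IH as' w₂ (V.drop (σ + e')) hus' hbs' hlen' h3 hgr
              (rel_drop (y := sfx) (w₂ := w₂) (Or.inl ⟨[], by rw [hV]; simp⟩) (σ + e'))
            have hsplitOld : y ++ w₂ = (p ++ (u ++ V.take (σ + e'))) ++ V.drop (σ + e') := by
              rw [hwOldV, hPU]
              simp
            rcases hrec with ⟨ds', hdl, hdb, hds, hWL'⟩ | ⟨ds', hdl, hdb, hds, hWL'⟩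
            · refine Or.inr ⟨(a+1) :: ds', by simp [hdl], ?_, ?_, ?_⟩
              · intro d hd; rcases List.mem_cons.mp hd with rfl | hd
                · exact ⟨by omega, by omega⟩
                · exact hdb d hd
              · simp only [List.sum_cons]; omega
              · exact ⟨p ++ (u ++ V.take (σ + e')), V.drop (σ + e'), hsplitOld,
                  hcopies.trans (sublist_append_right _ _),
                  fun _ => ⟨p, V.take (σ + e'), by simp⟩, hWL'⟩
            · refine Or.inr ⟨a :: ds', by simp [hdl], ?_, ?_, ?_⟩
              · intro d hd; rcases List.mem_cons.mp hd with rfl | hd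
                · exact ha
                · exact hdb d hd
              · simp only [List.sum_cons]; omega
              · exact ⟨y, w₂, rfl, h1, h2, hWL'⟩
      · -- a = l : no factor needed, cut greedily
        set e := minE (wpow u a) Wcur hsubhead with he
        have hgreedy : R <+ Wcur.drop e := minE_greedy hdem hsubhead
        have hrec := IH as' w₂ (Wcur.drop e) hus' hbs' hlen' h3 hgreedy
          (rel_drop (y := y) (w₂ := w₂) hrel e)
        rcases hrec with ⟨ds', hdl, hdb, hds, hWL'⟩ | ⟨ds', hdl, hdb, hds, hWL'⟩
        · refine Or.inl ⟨a :: ds', by simp [hdl], ?_, ?_, ?_⟩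
          · intro d hd; rcases List.mem_cons.mp hd with rfl | hd
            · exact ha
            · exact hdb d hd
          · simp only [List.sum_cons]; omega
          · exact ⟨Wcur.take e, Wcur.drop e, (List.take_append_drop _ _).symm,
              minE_spec _ _ hsubhead, fun hlt => absurd hlt hal, hWL'⟩
        · refine Or.inr ⟨a :: ds', by simp [hdl], ?_, ?_, ?_⟩
          · intro d hd; rcases List.mem_cons.mp hd with rfl | hd
            · exact ha
            · exact hdb d hd
          · simp only [List.sum_cons]; omega
          · exact ⟨y, w₂, rfl, h1, h2, hWL'⟩

theorem pre {l : ℕ} (hl : 1 ≤ l) :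
    ∀ (us : List (List α)) (j : ℕ) (as : List ℕ) (wOld g Wcur : List α),
    (∀ v ∈ us, v ≠ [] ∧ v.Nodup) →
    (∀ b ∈ as, 1 ≤ b ∧ b ≤ l) →
    as.length = us.length →
    j < as.length →
    as.getD j 0 + 1 ≤ l →
    WL l us as wOld →
    Wcur = g ++ wOld →
    bigSubL us (bumpL j as) <+ Wcur →
    ∃ ds, ds.length = us.length ∧ (∀ d ∈ ds, 1 ≤ d ∧ d ≤ l) ∧
        as.sum + 1 ≤ ds.sum ∧ WL l us ds Wcur := by
  intro us
  induction us with
  | nil =>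
      intro j as wOld g Wcur _ _ hlen hj _ _ _ _
      have has : as = [] := List.length_eq_zero_iff.mp (by simpa using hlen)
      subst has
      exact absurd hj (by simp)
  | cons u us' IH =>
      intro j as wOld g Wcur hus hbs hlen hj hjl hWL hWg hdem
      rcases as with _ | ⟨a, as'⟩
      · exact absurd hWL (by simp [WL])
      obtain ⟨y, w₂, rfl, h1, h2, h3⟩ := hWL
      have hu : u ≠ [] ∧ u.Nodup := hus u (List.mem_cons_self)
      have hus' : ∀ v ∈ us', v ≠ [] ∧ v.Nodup := fun v hv => hus v (List.mem_cons_of_mem _ hv)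
      have hbs' : ∀ b ∈ as', 1 ≤ b ∧ b ≤ l := fun b hb => hbs b (List.mem_cons_of_mem _ hb)
      have ha : 1 ≤ a ∧ a ≤ l := hbs a (List.mem_cons_self)
      have hlen' : as'.length = us'.length := by simpa using hlen
      rcases j with _ | j'
      · -- bump at the head coordinate
        have hal : a < l := by simpa using hjl
        obtain ⟨p, sfx, hy⟩ := h2 hal
        set R := bigSubL us' as' with hR
        have hdem' : wpow u (a+1) ++ R <+ Wcur := by
          simpa [bumpL, bigSubL_cons] using hdem
        have hsubhead : wpow u (a+1) <+ Wcur := (sublist_append_left _ _).trans hdem'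
        set Q := g ++ p with hQ
        have hQZ : Wcur = (Q ++ u) ++ (sfx ++ w₂) := by
          rw [hWg, ← hy, hQ]; simp
        have htakeQu : Wcur.take (Q.length + u.length) = Q ++ u := by
          rw [hQZ]; exact List.take_left' (by simp)
        set e := minE (wpow u (a+1)) Wcur hsubhead with he
        by_cases hcase : e ≤ Q.length + u.length
        · -- terminate: block Q ++ u, old tail lifted
          have hcopies : wpow u (a+1) <+ Q ++ u := by
            rw [← htakeQu]
            exact (minE_spec _ _ hsubhead).trans (take_sublist_take Wcur hcase)
          refine ⟨(a+1) :: as', by simpa using hlen', ?_,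
            by simp only [List.sum_cons]; omega, ?_⟩
          · intro d hd; rcases List.mem_cons.mp hd with rfl | hd
            · exact ⟨by omega, by omega⟩
            · exact hbs' d hd
          · exact ⟨Q ++ u, sfx ++ w₂, hQZ, hcopies,
              fun _ => ⟨Q, [], by simp⟩, WL_lift sfx h3⟩
        · -- spill: block is Wcur.take e, continue with post
          push_neg at hcase
          have hgreedy : R <+ Wcur.drop e := minE_greedy hdem' hsubhead
          have hsplit : Wcur.take e = (Q ++ u) ++
              (Wcur.drop (Q.length + u.length)).take (e - (Q.length + u.length)) := by
            rw [← htakeQu, ← List.take_add]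
            congr 1
            omega
          have hrec := post hl us' as' w₂ (Wcur.drop e) hus' hbs' hlen' h3 hgreedy
            (rel_drop (y := Q ++ u ++ sfx) (w₂ := w₂)
              (Or.inl ⟨[], by rw [hQZ]; simp⟩) e)
          rcases hrec with ⟨ds', hdl, hdb, hds, hWL'⟩ | ⟨ds', hdl, hdb, hds, hWL'⟩
          · refine ⟨(a+1) :: ds', by simp [hdl, hlen'], ?_, ?_, ?_⟩
            · intro d hd; rcases List.mem_cons.mp hd with rfl | hd
              · exact ⟨by omega, by omega⟩
              · exact hdb d hd
            · simp only [List.sum_cons]; omega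
            · exact ⟨Wcur.take e, Wcur.drop e, (List.take_append_drop _ _).symm,
                minE_spec _ _ hsubhead,
                fun _ => ⟨Q, _, by rw [hsplit, List.append_assoc]⟩, hWL'⟩
          · refine ⟨a :: ds', by simp [hdl, hlen'], ?_, ?_, ?_⟩
            · intro d hd; rcases List.mem_cons.mp hd with rfl | hd
              · exact ha
              · exact hdb d hd
            · simp only [List.sum_cons]; omega
            · refine ⟨g ++ y, w₂, by rw [hWg]; simp, h1.trans (sublist_append_right _ _),
                fun hlt => ((h2 hlt).trans (List.suffix_append g y).isInfix), hWL'⟩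
      · -- bump lies further right
        have hj' : j' < as'.length := by simpa using hj
        have hjl' : as'.getD j' 0 + 1 ≤ l := by simpa using hjl
        set Rb := bigSubL us' (bumpL j' as') with hRb
        have hdem' : wpow u a ++ Rb <+ Wcur := by
          simpa [bumpL, bigSubL_cons] using hdem
        have hsubhead : wpow u a <+ Wcur := (sublist_append_left _ _).trans hdem'
        set e := minE (wpow u a) Wcur hsubhead with he
        have hgy : Wcur = (g ++ y) ++ w₂ := by rw [hWg]; simp
        have hbound : e ≤ g.length + y.length := by
          refine minE_min hsubhead ?_
          have : Wcur.take (g.length + y.length) = g ++ y := by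
            rw [hgy]; exact List.take_left' (by simp)
          rw [this]
          exact h1.trans (sublist_append_right _ _)
        have hgreedy : Rb <+ Wcur.drop e := minE_greedy hdem' hsubhead
        have hdropform : Wcur.drop e = (g ++ y).drop e ++ w₂ := by
          rw [hgy]
          exact List.drop_append_of_le_length (by simpa using hbound)
        by_cases hal : a < l
        · obtain ⟨p, sfx, hy⟩ := h2 hal
          set Q := g ++ p with hQ
          have hQZ : Wcur = (Q ++ u) ++ (sfx ++ w₂) := by
            rw [hWg, ← hy, hQ]; simp
          have htakeQu : Wcur.take (Q.length + u.length) = Q ++ u := by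
            rw [hQZ]; exact List.take_left' (by simp)
          by_cases hcase : e ≤ Q.length
          · -- gain here, abandon the bump
            have hcopies : wpow u (a+1) <+ Q ++ u := by
              rw [wpow_succ']
              refine Sublist.append ?_ (Sublist.refl u)
              have : Wcur.take Q.length = Q := by
                rw [hQZ, List.append_assoc]
                exact List.take_left' rfl
              rw [← this]
              exact (minE_spec _ _ hsubhead).trans (take_sublist_take Wcur hcase)
            refine ⟨(a+1) :: as', by simpa using hlen', ?_,
              by simp only [List.sum_cons]; omega, ?_⟩
            · intro d hd; rcases List.mem_cons.mp hd with rfl | hd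
              · exact ⟨by omega, by omega⟩
              · exact hbs' d hd
            · exact ⟨Q ++ u, sfx ++ w₂, hQZ, hcopies,
                fun _ => ⟨Q, [], by simp⟩, WL_lift sfx h3⟩
          · push_neg at hcase
            by_cases hcase2 : e ≤ Q.length + u.length
            · -- nodup forces e = |Q| + |u|
              have heq : e = Q.length + u.length := by
                rw [he]
                refine minE_factor hu.1 hu.2 ?_ hsubhead htakeQu (by omega) (by omega)
                exact wpow_getLast? hu.1 ha.1
              have hdrop2 : Wcur.drop e = sfx ++ w₂ := by
                rw [heq, hQZ]
                exact List.drop_left' (by simp)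
              have hrec := IH j' as' w₂ sfx (Wcur.drop e) hus' hbs' hlen' hj' hjl' h3
                hdrop2 (by rw [← hRb]; exact hgreedy)
              obtain ⟨ds', hdl, hdb, hds, hWL'⟩ := hrec
              refine ⟨a :: ds', by simp [hdl, hlen'], ?_, ?_, ?_⟩
              · intro d hd; rcases List.mem_cons.mp hd with rfl | hd
                · exact ha
                · exact hdb d hd
              · simp only [List.sum_cons]; omega
              · refine ⟨Wcur.take e, Wcur.drop e, (List.take_append_drop _ _).symm,
                  minE_spec _ _ hsubhead, fun _ => ?_, hWL'⟩
                rw [heq, htakeQu]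
                exact ⟨Q, [], by simp⟩
            · push_neg at hcase2
              have hsplit : Wcur.take e = (Q ++ u) ++
                  (Wcur.drop (Q.length + u.length)).take (e - (Q.length + u.length)) := by
                rw [← htakeQu, ← List.take_add]
                congr 1
                omega
              have hrec := IH j' as' w₂ ((g ++ y).drop e) (Wcur.drop e) hus' hbs' hlen'
                hj' hjl' h3 hdropform (by rw [← hRb]; exact hgreedy)
              obtain ⟨ds', hdl, hdb, hds, hWL'⟩ := hrec
              refine ⟨a :: ds', by simp [hdl, hlen'], ?_, ?_, ?_⟩
              · intro d hd; rcases List.mem_cons.mp hd with rfl | hd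
                · exact ha
                · exact hdb d hd
              · simp only [List.sum_cons]; omega
              · exact ⟨Wcur.take e, Wcur.drop e, (List.take_append_drop _ _).symm,
                  minE_spec _ _ hsubhead,
                  fun _ => ⟨Q, _, by rw [hsplit, List.append_assoc]⟩, hWL'⟩
        · -- head has a = l, no factor needed
          have hrec := IH j' as' w₂ ((g ++ y).drop e) (Wcur.drop e) hus' hbs' hlen'
            hj' hjl' h3 hdropform (by rw [← hRb]; exact hgreedy)
          obtain ⟨ds', hdl, hdb, hds, hWL'⟩ := hrec
          refine ⟨a :: ds', by simp [hdl, hlen'], ?_, ?_, ?_⟩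
          · intro d hd; rcases List.mem_cons.mp hd with rfl | hd
            · exact ha
            · exact hdb d hd
          · simp only [List.sum_cons]; omega
          · exact ⟨Wcur.take e, Wcur.drop e, (List.take_append_drop _ _).symm,
              minE_spec _ _ hsubhead, fun hlt => absurd hlt hal, hWL'⟩

theorem sum_le_mul_length {l : ℕ} : ∀ (as : List ℕ), (∀ b ∈ as, b ≤ l) →
    as.sum ≤ l * as.length
  | [], _ => by simp
  | a :: as, h => by
      have h1 := h a (List.mem_cons_self)
      have h2 := sum_le_mul_length as (fun b hb => h b (List.mem_cons_of_mem _ hb))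
      simp only [List.sum_cons, List.length_cons]
      calc a + as.sum ≤ l + l * as.length := by omega
        _ = l * (as.length + 1) := by ring

theorem all_eq_of_sum_ge {l : ℕ} : ∀ (as : List ℕ), (∀ b ∈ as, b ≤ l) →
    l * as.length ≤ as.sum → ∀ b ∈ as, b = l
  | [], _, _ => by simp
  | a :: as, h, hsum => by
      have h1 := h a (List.mem_cons_self)
      have h2 := sum_le_mul_length as (fun b hb => h b (List.mem_cons_of_mem _ hb))
      simp only [List.sum_cons, List.length_cons] at hsum
      have hmul : l * (as.length + 1) = l * as.length + l := by ring
      rw [hmul] at hsum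
      have hal : a = l := by omega
      have hs' : l * as.length ≤ as.sum := by omega
      intro b hb
      rcases List.mem_cons.mp hb with rfl | hb
      · exact hal
      · exact all_eq_of_sum_ge as (fun b hb => h b (List.mem_cons_of_mem _ hb)) hs' b hb

theorem maximize {l : ℕ} (hl : 1 ≤ l) (us : List (List α)) (w : List α)
    (hus : ∀ v ∈ us, v ≠ [] ∧ v.Nodup) :
    ∀ (n : ℕ) (as : List ℕ), (∀ b ∈ as, 1 ≤ b ∧ b ≤ l) → as.length = us.length →
    WL l us as w → l * us.length ≤ as.sum + n →
    ∃ ds, ds.length = us.length ∧ (∀ d ∈ ds, 1 ≤ d ∧ d ≤ l) ∧ WL l us ds w ∧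
      ∀ j, j < ds.length → ds.getD j 0 < l → ¬ (bigSubL us (bumpL j ds) <+ w) := by
  intro n
  induction n with
  | zero =>
      intro as hbs hlen hWL hsum
      refine ⟨as, hlen, hbs, hWL, ?_⟩
      intro j hj hlt
      have := all_eq_of_sum_ge as (fun b hb => (hbs b hb).2) (by rw [hlen]; omega)
        (as.getD j 0) (by rw [List.getD_eq_getElem as 0 hj]; exact List.getElem_mem hj)
      omega
  | succ n IHn =>
      intro as hbs hlen hWL hsum
      by_cases hmax : ∀ j, j < as.length → as.getD j 0 < l → ¬ (bigSubL us (bumpL j as) <+ w)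
      · exact ⟨as, hlen, hbs, hWL, fun j hj => hmax j hj⟩
      · push_neg at hmax
        obtain ⟨j, hj, hlt, hsub⟩ := hmax
        obtain ⟨ds, hdl, hdb, hds, hWL'⟩ := pre hl us j as w [] w hus hbs hlen hj
          (by omega) hWL (by simp) hsub
        exact IHn ds hdb (by omega) hWL' (by omega)

theorem RL {l : ℕ} (hl : 1 ≤ l) (w : List α) :
    ∀ (us : List (List α)) (as : List ℕ) (G Wcur : List α),
    (∀ v ∈ us, v ≠ [] ∧ v.Nodup) → (∀ b ∈ as, 1 ≤ b ∧ b ≤ l) →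
    as.length = us.length →
    w = G ++ Wcur →
    bigSubL us as <+ Wcur →
    (∀ m, m < us.length → as.getD m 0 < l →
      ∃ P S, w = P ++ (us.getD m [] ++ S) ∧
        bigSubL (us.drop (m+1)) (as.drop (m+1)) <+ S ∧
        ¬ (wpow (us.getD m []) (as.getD m 0) ++
            bigSubL (us.drop (m+1)) (as.drop (m+1)) <+ S)) →
    ∃ ds, ds.length = us.length ∧ (∀ d ∈ ds, d = 1 ∨ d = l) ∧ WL l us ds Wcur := by
  intro us
  induction us with
  | nil =>
      intro as G Wcur _ _ _ _ _ _
      exact ⟨[], rfl, by simp, trivial⟩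
  | cons u us' IH =>
      intro as G Wcur hus hbs hlen hwG hdem hPKG
      rcases as with _ | ⟨a, as'⟩
      · simp at hlen
      have hu : u ≠ [] ∧ u.Nodup := hus u (List.mem_cons_self)
      have hus' : ∀ v ∈ us', v ≠ [] ∧ v.Nodup := fun v hv => hus v (List.mem_cons_of_mem _ hv)
      have hbs' : ∀ b ∈ as', 1 ≤ b ∧ b ≤ l := fun b hb => hbs b (List.mem_cons_of_mem _ hb)
      have ha : 1 ≤ a ∧ a ≤ l := hbs a (List.mem_cons_self)
      have hlen' : as'.length = us'.length := by simpa using hlen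
      rw [bigSubL_cons] at hdem
      have hsubhead : wpow u a <+ Wcur := (sublist_append_left _ _).trans hdem
      have hPKG' : ∀ m, m < us'.length → as'.getD m 0 < l →
          ∃ P S, w = P ++ (us'.getD m [] ++ S) ∧
            bigSubL (us'.drop (m+1)) (as'.drop (m+1)) <+ S ∧
            ¬ (wpow (us'.getD m []) (as'.getD m 0) ++
                bigSubL (us'.drop (m+1)) (as'.drop (m+1)) <+ S) := by
        intro m hm hml
        have := hPKG (m+1) (by simpa using hm) (by simpa using hml)
        simpa using this
      by_cases hal : a < l
      · -- use the packaged occurrence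
        obtain ⟨P, S, hw, hScert, hneg⟩ := hPKG 0 (by simp) (by simpa using hal)
        simp only [List.getD_cons_zero, List.drop_succ_cons, List.drop_zero] at hw hScert hneg
        set PU := P ++ u with hPU
        have hwPU : w = PU ++ S := by rw [hw, hPU]; simp
        rcases le_or_gt G.length P.length with hGP | hGP
        · -- occurrence intact in Wcur
          have hWc : Wcur = (P.drop G.length ++ u) ++ S := by
            have h4 := congrArg (List.drop G.length) hwG
            rw [List.drop_left] at h4
            rw [← h4, hw, List.drop_append_of_le_length hGP]
            simp
          have hrec := IH as' (G ++ (P.drop G.length ++ u)) S hus' hbs' hlen'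
            (by rw [hwG, hWc]; simp) hScert hPKG'
          obtain ⟨ds', hdl, hdb, hWL'⟩ := hrec
          refine ⟨1 :: ds', by simpa using hdl, ?_, ?_⟩
          · intro d hd; rcases List.mem_cons.mp hd with rfl | hd
            · exact Or.inl rfl
            · exact hdb d hd
          · refine ⟨P.drop G.length ++ u, S, hWc, ?_, fun _ => ⟨P.drop G.length, [], by simp⟩, hWL'⟩
            rw [wpow_one]
            exact sublist_append_right _ _
        · -- occurrence swallowed: contradiction with the package
          exfalso
          have hWcdrop : Wcur = List.drop G.length (PU ++ S) := by
            have h4 := congrArg (List.drop G.length) hwG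
            rw [List.drop_left] at h4
            rw [← h4, hwPU]
          have hPUlen : PU.length = P.length + u.length := by rw [hPU]; simp
          have hT : wpow u a ++ bigSubL us' as' <+ S := by
            rcases le_or_gt (P.length + u.length) G.length with hbig | hsmall
            · have : Wcur = S.drop (G.length - PU.length) := by
                rw [hWcdrop, List.drop_append,
                  List.drop_eq_nil_of_le (by omega), List.nil_append]
              exact (this ▸ hdem).trans (drop_sublist_drop S (Nat.zero_le _))
            · have h5 : PU.drop G.length = u.drop (G.length - P.length) := by
                rw [hPU, List.drop_append,
                  List.drop_eq_nil_of_le hGP.le, List.nil_append]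
              have hWV : Wcur = u.drop (G.length - P.length) ++ S := by
                rw [hWcdrop, List.drop_append_of_le_length (by omega), h5]
              refine head_trick (hWV ▸ hdem) ?_
              intro c hc
              rw [wpow_head? hu.1 ha.1] at hc
              exact head_notin_proper_suffix hu.1 hu.2 (by omega) hc
          exact hneg hT
      · -- a = l : greedy cut
        have haeq : a = l := by omega
        have hgreedy : bigSubL us' as' <+ Wcur.drop (minE (wpow u a) Wcur hsubhead) :=
          minE_greedy hdem hsubhead
        have hrec := IH as' (G ++ Wcur.take (minE (wpow u a) Wcur hsubhead))
          (Wcur.drop (minE (wpow u a) Wcur hsubhead)) hus' hbs' hlen'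
          (by rw [hwG]; simp) hgreedy hPKG'
        obtain ⟨ds', hdl, hdb, hWL'⟩ := hrec
        refine ⟨a :: ds', by simpa using hdl, ?_, ?_⟩
        · intro d hd; rcases List.mem_cons.mp hd with rfl | hd
          · exact Or.inr haeq
          · exact hdb d hd
        · exact ⟨Wcur.take _, Wcur.drop _, (List.take_append_drop _ _).symm,
            minE_spec _ _ hsubhead, fun hlt => absurd hlt hal, hWL'⟩

theorem chain_decode : ∀ (Ls : List (Set (List α))) (w : List α), w ∈ chainConc Ls →
    ∃ ys : List (List α), ys.length = Ls.length ∧ w = ys.flatten ∧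
      ∀ n (h1 : n < ys.length) (h2 : n < Ls.length), ys[n] ∈ Ls[n] := by
  intro Ls
  induction Ls with
  | nil =>
      intro w hw
      refine ⟨[], rfl, ?_, by simp⟩
      simpa [chainConc] using hw
  | cons L Ls IH =>
      intro w hw
      obtain ⟨x, hx, z, hz, rfl⟩ := hw
      obtain ⟨ys, hl, rfl, hmem⟩ := IH z hz
      refine ⟨x :: ys, by simp [hl], by simp, ?_⟩
      intro n h1 h2
      cases n with
      | zero => simpa using hx
      | succ n => simpa using hmem n (by simpa using h1) (by simpa using h2)

theorem chain_encode : ∀ (Ls : List (Set (List α))) (ys : List (List α)),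
    ys.length = Ls.length →
    (∀ n (h1 : n < ys.length) (h2 : n < Ls.length), ys[n] ∈ Ls[n]) →
    ys.flatten ∈ chainConc Ls := by
  intro Ls
  induction Ls with
  | nil =>
      intro ys hlen _
      have : ys = [] := List.length_eq_zero_iff.mp (by simpa using hlen)
      subst this
      simp only [List.flatten_nil, chainConc, List.foldr_nil]
      rfl
  | cons L Ls IH =>
      intro ys hlen hmem
      rcases ys with _ | ⟨y, ys⟩
      · simp at hlen
      refine ⟨y, hmem 0 (by simp) (by simp), ys.flatten, ?_, by simp⟩
      exact IH ys (by simpa using hlen) fun n h1 h2 =>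
        by exact hmem (n+1) (by simpa using h1) (by simpa using h2)

theorem WL_blocks {l : ℕ} : ∀ (us : List (List α)) (as : List ℕ) (w : List α),
    us ≠ [] → WL l us as w →
    ∃ ys : List (List α), ys.length = us.length ∧ w = ys.flatten ∧
      ∀ n (h1 : n < ys.length) (h2 : n < us.length) (h3 : n < as.length),
        wpow (us[n]) (as[n]) <+ ys[n] ∧ (as[n] < l → us[n] <:+: ys[n]) := by
  intro us
  induction us with
  | nil => intro as w h; exact absurd rfl h
  | cons u us' IH =>
      intro as w _ hWL
      rcases as with _ | ⟨a, as'⟩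
      · exact absurd hWL (by simp [WL])
      obtain ⟨y, w₂, rfl, h1, h2, h3⟩ := hWL
      rcases us' with _ | ⟨u', us''⟩
      · refine ⟨[y ++ w₂], by simp, by simp, ?_⟩
        intro n hn1 hn2 hn3
        cases n with
        | zero =>
            exact ⟨by simpa using h1.trans (sublist_append_left y w₂),
              fun hlt => by
                simpa using ((h2 (by simpa using hlt)).trans
                  (List.prefix_append y w₂).isInfix)⟩
        | succ n => simp at hn2
      · obtain ⟨ys, hyl, rfl, hmem⟩ := IH as' w₂ (by simp) h3
        refine ⟨y :: ys, by simp [hyl], by simp, ?_⟩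
        intro n h1' h2' h3'
        cases n with
        | zero => exact ⟨by simpa using h1, fun hlt => by simpa using h2 hlt⟩
        | succ n =>
            exact hmem n (by simpa using h1') (by simpa using h2') (by simpa using h3')

theorem WL_S {l : ℕ} : ∀ (j : ℕ) (us : List (List α)) (as : List ℕ) (w : List α),
    WL l us as w → j < us.length → j < as.length →
    as.getD j 0 < l →
    ∃ P S, w = P ++ (us.getD j [] ++ S) ∧
      bigSubL (us.take j) (as.take j) <+ P ∧
      bigSubL (us.drop (j+1)) (as.drop (j+1)) <+ S := by
  intro j
  induction j with
  | zero =>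
      intro us as w hWL hju hja hjl
      rcases us with _ | ⟨u, us'⟩
      · simp at hju
      rcases as with _ | ⟨a, as'⟩
      · exact absurd hWL (by simp [WL])
      obtain ⟨y, w₂, rfl, h1, h2, h3⟩ := hWL
      obtain ⟨p, sfx, hy⟩ := h2 (by simpa using hjl)
      refine ⟨p, sfx ++ w₂, by rw [← hy]; simp, by simp [bigSubL], ?_⟩
      simpa using (WL_sub h3).trans (sublist_append_right sfx w₂)
  | succ j IH =>
      intro us as w hWL hju hja hjl
      rcases us with _ | ⟨u, us'⟩
      · simp at hju
      rcases as with _ | ⟨a, as'⟩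
      · exact absurd hWL (by simp [WL])
      obtain ⟨y, w₂, rfl, h1, h2, h3⟩ := hWL
      obtain ⟨P, S, hw₂, hP, hS⟩ := IH us' as' w₂ h3 (by simpa using hju)
        (by simpa using hja) (by simpa using hjl)
      refine ⟨y ++ P, S, by rw [hw₂]; simp, ?_, by simpa using hS⟩
      simpa [bigSubL_cons] using Sublist.append h1 hP

theorem blocks_to_WL {l : ℕ} (hl : 1 ≤ l) : ∀ (us ys : List (List α)),
    us.length = ys.length →
    (∀ n (h1 : n < us.length) (h2 : n < ys.length),
        wpow (us[n]) l <+ ys[n] ∨ us[n] <:+: ys[n]) →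
    ∃ as, as.length = us.length ∧ (∀ b ∈ as, 1 ≤ b ∧ b ≤ l) ∧ WL l us as ys.flatten := by
  intro us
  induction us with
  | nil => intro ys _ _; exact ⟨[], rfl, by simp, trivial⟩
  | cons u us' IH =>
      intro ys hlen hmem
      rcases ys with _ | ⟨y, ys'⟩
      · simp at hlen
      obtain ⟨as', hal, hab, hWL'⟩ := IH ys' (by simpa using hlen)
        (fun n h1 h2 => by exact hmem (n+1) (by simpa using h1) (by simpa using h2))
      by_cases hc : wpow u l <+ y
      · refine ⟨l :: as', by simp [hal], ?_, ?_⟩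
        · intro b hb
          rcases List.mem_cons.mp hb with h | h
          · exact ⟨by omega, by omega⟩
          · exact hab b h
        · exact ⟨y, ys'.flatten, by simp, hc, fun hlt => absurd hlt (lt_irrefl _), hWL'⟩
      · have hfac : u <:+: y := by
          rcases hmem 0 (by simp) (by simp) with h | h
          · exact absurd (by simpa using h) hc
          · simpa using h
        refine ⟨1 :: as', by simp [hal], ?_, ?_⟩
        · intro b hb; rcases List.mem_cons.mp hb with rfl | hb
          · exact ⟨le_refl 1, hl⟩
          · exact hab b hb
        · exact ⟨y, ys'.flatten, by simp, by rw [wpow_one]; exact hfac.sublist,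
            fun _ => hfac, hWL'⟩

theorem bigSubL_map {ι : Type*} : ∀ (L : List ι) (f : ι → List α) (g : ι → ℕ),
    bigSubL (L.map f) (L.map g) = L.flatMap (fun i => wpow (f i) (g i))
  | [], _, _ => rfl
  | i :: L, f, g => by
      simp only [List.map_cons, bigSubL_cons, List.flatMap_cons]
      rw [bigSubL_map L f g]

theorem bumpL_getD : ∀ (j : ℕ) (as : List ℕ) (m : ℕ),
    (bumpL j as).getD m 0 = if m = j ∧ m < as.length then as.getD m 0 + 1 else as.getD m 0
  | j, [], m => by cases j <;> simp [bumpL]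
  | 0, a :: as, 0 => by simp [bumpL]
  | 0, a :: as, m+1 => by simp [bumpL]
  | j+1, a :: as, 0 => by simp [bumpL]
  | j+1, a :: as, m+1 => by
      simp only [bumpL, List.getD_cons_succ, List.length_cons]
      rw [bumpL_getD j as m]
      by_cases h : m = j ∧ m < as.length
      · rw [if_pos h, if_pos ⟨by omega, by omega⟩]
      · rw [if_neg h, if_neg (by omega)]

theorem bumpL_take : ∀ (j : ℕ) (as : List ℕ), (bumpL j as).take j = as.take j
  | j, [] => by cases j <;> rfl
  | 0, a :: as => by simp
  | j+1, a :: as => by simp [bumpL, bumpL_take j as]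

theorem bumpL_drop : ∀ (j : ℕ) (as : List ℕ), (bumpL j as).drop (j+1) = as.drop (j+1)
  | j, [] => by cases j <;> rfl
  | 0, a :: as => by simp [bumpL]
  | j+1, a :: as => by simpa [bumpL] using bumpL_drop j as

theorem bigSubL_split : ∀ (m : ℕ) (us : List (List α)) (as : List ℕ),
    m < us.length → m < as.length →
    bigSubL us as = bigSubL (us.take m) (as.take m) ++
      (wpow (us.getD m []) (as.getD m 0) ++ bigSubL (us.drop (m+1)) (as.drop (m+1))) := by
  intro m
  induction m with
  | zero =>
      intro us as h1 h2
      rcases us with _ | ⟨u, us'⟩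
      · simp at h1
      rcases as with _ | ⟨a, as'⟩
      · simp at h2
      simp [bigSubL_cons, bigSubL]
  | succ m IH =>
      intro us as h1 h2
      rcases us with _ | ⟨u, us'⟩
      · simp at h1
      rcases as with _ | ⟨a, as'⟩
      · simp at h2
      simp only [List.take_succ_cons, List.drop_succ_cons, List.getD_cons_succ]
      rw [bigSubL_cons, IH us' as' (by simpa using h1) (by simpa using h2)]
      simp [bigSubL_cons]

section Bridge
variable {k : ℕ}

theorem bigSub_eq (u : Fin k → List α) (a : Fin k → ℕ) :
    bigSub u a = bigSubL ((List.finRange k).map u) ((List.finRange k).map a) :=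
  (bigSubL_map _ u a).symm

theorem map_getD_finRange {β : Type*} (f : Fin k → β) (m : ℕ) (hm : m < k) (d : β) :
    ((List.finRange k).map f).getD m d = f ⟨m, hm⟩ := by
  rw [List.getD_eq_getElem _ _ (by simpa using hm), List.getElem_map,
    List.getElem_finRange]
  rfl

theorem map_getElem_finRange {β : Type*} (f : Fin k → β) (m : ℕ)
    (hm : m < ((List.finRange k).map f).length) :
    ((List.finRange k).map f)[m] = f ⟨m, by simpa using hm⟩ := by
  rw [List.getElem_map, List.getElem_finRange]
  rfl

theorem take_flat_eq (u : Fin k → List α) (a : Fin k → ℕ) (m : ℕ) :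
    ((List.finRange k).take m).flatMap (fun i => wpow (u i) (a i)) =
      bigSubL (((List.finRange k).map u).take m) (((List.finRange k).map a).take m) := by
  rw [← List.map_take, ← List.map_take, bigSubL_map]

theorem drop_flat_eq (u : Fin k → List α) (a : Fin k → ℕ) (m : ℕ) :
    ((List.finRange k).drop m).flatMap (fun i => wpow (u i) (a i)) =
      bigSubL (((List.finRange k).map u).drop m) (((List.finRange k).map a).drop m) := by
  rw [← List.map_drop, ← List.map_drop, bigSubL_map]

theorem bump_map_eq (a : Fin k → ℕ) (i : Fin k) :
    (List.finRange k).map (Function.update a i (a i + 1)) =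
      bumpL i.val ((List.finRange k).map a) := by
  refine List.ext_getElem (by simp [bumpL_length]) ?_
  intro m h1 h2
  have hmk : m < k := by simpa using h1
  have hmlen : m < ((List.finRange k).map a).length := by simpa using hmk
  have hmlen' : m < ((List.finRange k).map a).length := by simpa using hmk
  rw [map_getElem_finRange _ m h1, ← List.getD_eq_getElem _ 0 h2, bumpL_getD]
  by_cases hmi : m = i.val
  · have hfin : (⟨m, by simpa using h1⟩ : Fin k) = i := Fin.ext hmi
    rw [Function.update_apply, if_pos hfin, if_pos ⟨hmi, hmlen'⟩,
      map_getD_finRange a m hmk, hfin]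
  · rw [Function.update_apply, if_neg (fun hc => hmi (congrArg Fin.val hc)),
      if_neg (fun hc => hmi hc.1), map_getD_finRange a m hmk]

end Bridge

end Aux

open Aux

theorem stmt_11 {α : Type*} (l k : ℕ) (hl : 1 ≤ l) (hk : 1 ≤ k)
    (u : Fin k → List α) (hne : ∀ i, u i ≠ []) (hnd : ∀ i, (u i).Nodup) :
    (⋃ q ∈ {q : Fin k → ℕ | ∀ i, q i = 1 ∨ q i = l},
        chainConc ((List.finRange k).map fun i => Lul (u i) l (q i))) =
      ⋃ a ∈ {a : Fin k → ℕ | ∀ i, 1 ≤ a i ∧ a i ≤ l},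
        (({w | (bigSub u a).Sublist w} ∩
            ⋂ i ∈ {i : Fin k | a i < l},
              {w : List α | (bigSub u (Function.update a i (a i + 1))).Sublist w}ᶜ) ∩
          ⋂ i ∈ {i : Fin k | a i < l},
            lconc
              {w | (((List.finRange k).take i.val).flatMap
                      fun i' => wpow (u i') (a i')).Sublist w}
              (lconc {u i}
                {w | (((List.finRange k).drop (i.val + 1)).flatMap
                        fun i' => wpow (u i') (a i')).Sublist w})) := by
  set us : List (List α) := (List.finRange k).map u with hus_def
  have husL : ∀ v ∈ us, v ≠ [] ∧ v.Nodup := by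
    intro v hv
    obtain ⟨i, _, rfl⟩ := List.mem_map.mp hv
    exact ⟨hne i, hnd i⟩
  have hkus : us.length = k := by simp [hus_def]
  ext w
  simp only [Set.mem_iUnion₂]
  constructor
  · rintro ⟨q, hq, hw⟩
    obtain ⟨ys, hylen, hwfl, hymem⟩ := chain_decode _ w hw
    have hylen' : ys.length = k := by simpa using hylen
    -- initial WL structure
    obtain ⟨as0, ha0l, ha0b, hWL0⟩ := blocks_to_WL hl us ys (by rw [hkus, hylen'])
      (by
        intro n h1 h2
        have hnk : n < k := by rwa [hkus] at h1
        have hy := hymem n (by omega) (by simpa using hnk)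
        rw [map_getElem_finRange (fun i => Lul (u i) l (q i)) n (by simpa using hnk)] at hy
        rw [map_getElem_finRange u n h1]
        rcases hq ⟨n, hnk⟩ with hq1 | hql
        · rw [hq1] at hy
          unfold Lul at hy
          by_cases h1l : 1 < l
          · rw [if_pos h1l] at hy
            exact Or.inr hy
          · rw [if_neg h1l] at hy
            exact Or.inl hy
        · rw [hql] at hy
          unfold Lul at hy
          rw [if_neg (lt_irrefl l)] at hy
          exact Or.inl hy)
    rw [← hwfl] at hWL0
    obtain ⟨ds, hdl, hdb, hWLd, hmaxR⟩ := maximize hl us w husL (l * us.length)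
      as0 ha0b ha0l hWL0 (by omega)
    set a : Fin k → ℕ := fun i => ds.getD i.val 0 with ha_def
    have hdlk : ds.length = k := by rw [hdl, hkus]
    have hmap_a : (List.finRange k).map a = ds := by
      refine List.ext_getElem (by simp [hdlk]) ?_
      intro m h1 h2
      rw [map_getElem_finRange a m h1]
      exact List.getD_eq_getElem ds 0 h2
    have ha : ∀ i : Fin k, 1 ≤ a i ∧ a i ≤ l := by
      intro i
      have hi : i.val < ds.length := by omega
      have := hdb (ds.getD i.val 0) (by
        rw [List.getD_eq_getElem ds 0 hi]
        exact List.getElem_mem hi)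
      exact this
    refine ⟨a, ha, ⟨⟨?_, ?_⟩, ?_⟩⟩
    · show bigSub u a <+ w
      rw [bigSub_eq, hmap_a]
      exact WL_sub hWLd
    · rw [Set.mem_iInter₂]
      intro i hi
      rw [Set.mem_compl_iff]
      show ¬ bigSub u (Function.update a i (a i + 1)) <+ w
      rw [bigSub_eq, bump_map_eq, hmap_a]
      exact hmaxR i.val (by omega) hi
    · rw [Set.mem_iInter₂]
      intro i hi
      obtain ⟨P, S, hwPS, hP, hS⟩ := WL_S i.val us ds w hWLd (by omega) (by omega) hi
      refine ⟨P, ?_, u i ++ S, ⟨u i, rfl, S, ?_, rfl⟩, ?_⟩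
      · show ((List.finRange k).take i.val).flatMap (fun i' => wpow (u i') (a i')) <+ P
        rw [take_flat_eq, hmap_a]
        exact hP
      · show ((List.finRange k).drop (i.val + 1)).flatMap (fun i' => wpow (u i') (a i')) <+ S
        rw [drop_flat_eq, hmap_a]
        exact hS
      · rw [hwPS]
        congr 2
        rw [map_getD_finRange u i.val i.isLt []]
  · rintro ⟨a, ha, ⟨⟨h1, h2⟩, h3⟩⟩
    set asm : List ℕ := (List.finRange k).map a with hasm_def
    have hasml : asm.length = k := by simp [hasm_def]
    have habs : ∀ b ∈ asm, 1 ≤ b ∧ b ≤ l := by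
      intro b hb
      obtain ⟨i, _, rfl⟩ := List.mem_map.mp hb
      exact ha i
    have hdem : bigSubL us asm <+ w := by rw [← bigSub_eq]; exact h1
    have hPKG : ∀ m, m < us.length → asm.getD m 0 < l →
        ∃ P S, w = P ++ (us.getD m [] ++ S) ∧
          bigSubL (us.drop (m+1)) (asm.drop (m+1)) <+ S ∧
          ¬ (wpow (us.getD m []) (asm.getD m 0) ++
              bigSubL (us.drop (m+1)) (asm.drop (m+1)) <+ S) := by
      intro m hm hml
      have hmk : m < k := by rwa [hkus] at hm
      set i : Fin k := ⟨m, hmk⟩ with hi_def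
      have hgd : asm.getD m 0 = a i := map_getD_finRange a m hmk 0
      have hgu : us.getD m [] = u i := map_getD_finRange u m hmk []
      have hil : a i < l := by rwa [hgd] at hml
      have h3i := Set.mem_iInter₂.mp h3 i hil
      obtain ⟨P, hP, z, hz, hwz⟩ := h3i
      obtain ⟨x, hx, S, hS, rfl⟩ := hz
      rw [Set.mem_singleton_iff] at hx
      subst hx
      refine ⟨P, S, by rw [hwz, hgu], ?_, ?_⟩
      · rw [← hasm_def, ← hus_def] at *
        have := hS
        rw [drop_flat_eq] at this
        exact this
      · intro hT
        rw [hgu, hgd] at hT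
        have hbump : bigSub u (Function.update a i (a i + 1)) <+ w := by
          rw [bigSub_eq, bump_map_eq, ← hasm_def, ← hus_def]
          rw [bigSubL_split m us (bumpL m asm) (by omega)
            (by rw [bumpL_length]; omega)]
          rw [bumpL_take, bumpL_drop, bumpL_getD, if_pos ⟨rfl, by omega⟩]
          rw [hwz]
          refine Sublist.append ?_ ?_
          · have := hP
            rw [take_flat_eq] at this
            exact this
          · rw [hgu, hgd, wpow_succ, List.append_assoc]
            exact Sublist.append (Sublist.refl (u i)) hT
        have := Set.mem_iInter₂.mp h2 i hil
        rw [Set.mem_compl_iff] at this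
        exact this hbump
    obtain ⟨ds, hdl, hd1l, hWLds⟩ := RL hl w us asm [] w husL habs (by rw [hasml, hkus])
      (by simp) hdem hPKG
    have hdlk : ds.length = k := by rw [hdl, hkus]
    obtain ⟨ys, hylen, hwfl, hycert⟩ := WL_blocks us ds w
      (by rw [← List.length_pos_iff_ne_nil]; omega) hWLds
    set q : Fin k → ℕ := fun i => ds.getD i.val 0 with hq_def
    have hq : ∀ i : Fin k, q i = 1 ∨ q i = l := by
      intro i
      have hi : i.val < ds.length := by omega
      refine hd1l (ds.getD i.val 0) ?_
      rw [List.getD_eq_getElem ds 0 hi]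
      exact List.getElem_mem hi
    refine ⟨q, hq, ?_⟩
    rw [hwfl]
    refine chain_encode _ ys (by simpa using (hylen.trans hkus)) ?_
    intro n hn1 hn2
    have hnk : n < k := by simpa using hn2
    rw [map_getElem_finRange (fun i => Lul (u i) l (q i)) n (by simpa using hnk)]
    have hnus : n < us.length := by omega
    have hnds : n < ds.length := by omega
    obtain ⟨hcopies, hfac⟩ := hycert n hn1 hnus hnds
    have husn : us[n] = u ⟨n, hnk⟩ := map_getElem_finRange u n hnus
    have hqn : q ⟨n, hnk⟩ = ds[n] := by
      rw [hq_def]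
      exact List.getD_eq_getElem ds 0 hnds
    rcases hq ⟨n, hnk⟩ with hq1 | hql
    · unfold Lul
      by_cases h1l : 1 < l
      · rw [if_pos (hq1 ▸ h1l)]
        have : ds[n] < l := by omega
        rw [← husn]
        exact hfac this
      · have hleq : l = 1 := by omega
        rw [hq1, if_neg h1l, ← husn]
        have : ds[n] = l := by omega
        exact Set.mem_setOf.mpr (by rw [← this]; exact hcopies)
    · unfold Lul
      rw [hql, if_neg (lt_irrefl l), ← husn]
      have : ds[n] = l := by omega
      exact Set.mem_setOf.mpr (by rw [← this]; exact hcopies)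
end

section
/- Let Σ be an alphabet and L ⊆ Σ*. Suppose there exist u_0, u_n ∈ Σ*, n ≥ 2, nonempty A_1,…,A_n ⊆ Σ, and for each i ∈ [n−1] a word u_i ∈ Σ^+ with alphabet(u_i) ⊄ A_i and alphabet(u_i) ⊄ A_{i+1}, such that L = u_0 A_1* u_1 A_2* u_2 ⋯ u_{n−1} A_n* u_n. Then every w ∈ L of the form w = u_0 α_1 u_1 α_2 ⋯ u_{n−1} α_n u_n with α_i ∈ A_i* satisfies: w does not contain u_0 u_1 ⋯ u_{i−1} · c · u_i ⋯ u_{n−1} u_n as a 'factor-chain' in the sense that w ∉ ⟨u_0, u_1, …, u_{i−1}, c, u_i, …, u_{n−1}, u_n⟩_2 for every i ∈ [n] and every letter c ∈ Σ∖A_i. -/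
/-- `⟨u⟩_l`: words containing `u` as a factor or `u^l` as a subword. -/
def cc {α : Type*} (u : List α) (l : ℕ) : Set (List α) :=
  {w | u <:+: w ∨ (wpow u l).Sublist w}

section Aux

open List

variable {α : Type*}

lemma wpow_two (u : List α) : wpow u 2 = u ++ u := by
  simp [wpow, List.replicate]

lemma mem_chainConc_nil {w : List α} : w ∈ chainConc ([] : List (Set (List α))) ↔ w = [] :=
  Iff.rfl

lemma mem_chainConc_cons {L : Set (List α)} {Ls : List (Set (List α))} {w : List α} :
    w ∈ chainConc (L :: Ls) ↔ ∃ x ∈ L, ∃ y ∈ chainConc Ls, w = x ++ y :=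
  Iff.rfl

lemma mem_chainConc_append {Ls Ks : List (Set (List α))} {w : List α} :
    w ∈ chainConc (Ls ++ Ks) ↔ ∃ x ∈ chainConc Ls, ∃ y ∈ chainConc Ks, w = x ++ y := by
  induction Ls generalizing w with
  | nil =>
      constructor
      · intro h; exact ⟨[], rfl, w, h, rfl⟩
      · rintro ⟨x, hx, y, hy, rfl⟩
        have hx' : x = [] := hx
        subst hx'; simpa using hy
  | cons L Ls ih =>
      constructor
      · rintro ⟨x, hx, y, hy, rfl⟩
        rcases ih.mp hy with ⟨y₁, hy₁, y₂, hy₂, rfl⟩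
        exact ⟨x ++ y₁, ⟨x, hx, y₁, hy₁, rfl⟩, y₂, hy₂, by simp⟩
      · rintro ⟨x, hx, y, hy, rfl⟩
        rcases hx with ⟨x₁, hx₁, x₂, hx₂, rfl⟩
        exact ⟨x₁, hx₁, x₂ ++ y, ih.mpr ⟨x₂, hx₂, y, hy, rfl⟩, by simp⟩

lemma first_split (p : α → Prop) :
    ∀ l : List α, (∃ a ∈ l, ¬ p a) →
      ∃ g a h', l = g ++ a :: h' ∧ ¬ p a ∧ ∀ x ∈ g, p x := by
  intro l
  induction l with
  | nil => rintro ⟨a, ha, -⟩; cases ha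
  | cons b t ih =>
      intro h
      by_cases hb : p b
      · have ht : ∃ a ∈ t, ¬ p a := by
          rcases h with ⟨a, ha, hna⟩
          rcases List.mem_cons.mp ha with rfl | h'
          · exact absurd hb hna
          · exact ⟨a, h', hna⟩
        obtain ⟨g, a, h', rfl, hna, hg⟩ := ih ht
        refine ⟨b :: g, a, h', rfl, hna, ?_⟩
        intro x hx
        rcases List.mem_cons.mp hx with rfl | hx'
        · exact hb
        · exact hg x hx'
      · exact ⟨[], b, t, rfl, hb, by simp⟩

lemma occ_fwd {Aj : Set α} {al uj d e : List α}
    (hal : ∀ a ∈ al, a ∈ Aj) (ha : ∃ a ∈ uj, a ∉ Aj)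
    (h : al ++ uj = d ++ (uj ++ e)) : e = [] := by
  by_contra he
  obtain ⟨g, a, h', huj, hna, hg⟩ := first_split (· ∈ Aj) uj ha
  subst huj
  have hlen : al.length = d.length + e.length := by
    have := congrArg List.length h
    simp at this; omega
  have he1 : 1 ≤ e.length := List.length_pos_iff.mpr he
  set k := d.length + (g.length + 1) with hk
  have h1 : (al ++ (g ++ a :: h')).take k = (d ++ ((g ++ a :: h') ++ e)).take k := by
    rw [h]
  have h2 : (d ++ ((g ++ a :: h') ++ e)).take k = d ++ (g ++ [a]) := by
    rw [List.take_append, List.take_of_length_le (show d.length ≤ k by omega)]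
    have e1 : k - d.length = g.length + 1 := by omega
    rw [e1, List.append_assoc, List.take_append,
      List.take_of_length_le (show g.length ≤ g.length + 1 by simp)]
    simp
  have h3 : (al ++ (g ++ a :: h')).take k = ((al ++ g) ++ a :: h').take k := by
    simp [List.append_assoc]
  have h4 : ((al ++ g) ++ a :: h').take k = (al ++ g).take k := by
    rw [List.take_append_of_le_length]
    simp; omega
  have hmem : a ∈ al ++ g := by
    have : a ∈ (al ++ g).take k := by
      rw [← h4, ← h3, h1, h2]; simp
    exact (List.take_sublist _ _).subset this
  rcases List.mem_append.mp hmem with h5 | h5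
  · exact hna (hal a h5)
  · exact hna (hg a h5)

lemma occ_bwd {A' : Set α} {al uj d e : List α}
    (hal : ∀ a ∈ al, a ∈ A') (hb : ∃ a ∈ uj, a ∉ A')
    (h : uj ++ al = d ++ (uj ++ e)) : d = [] := by
  have h' : al.reverse ++ uj.reverse = e.reverse ++ (uj.reverse ++ d.reverse) := by
    have := congrArg List.reverse h
    simpa [List.reverse_append, List.append_assoc] using this
  have : d.reverse = [] := by
    refine occ_fwd (Aj := A') ?_ ?_ h'
    · intro a ha'; exact hal a (List.mem_reverse.mp ha')
    · obtain ⟨a, ha1, ha2⟩ := hb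
      exact ⟨a, List.mem_reverse.mpr ha1, ha2⟩
  simpa using this

lemma no_sub_fwd {Aj : Set α} {al uj : List α}
    (hal : ∀ a ∈ al, a ∈ Aj) (ha : ∃ a ∈ uj, a ∉ Aj) :
    ¬ ((uj ++ uj) <+ (al ++ uj)) := by
  intro h
  obtain ⟨a, haj, hna⟩ := ha
  rw [List.sublist_append_iff] at h
  obtain ⟨l₁, l₂, heq, h1, h2⟩ := h
  have hlen : uj.length ≤ l₁.length := by
    have hl2 := h2.length_le
    have := congrArg List.length heq
    simp at this; omega
  have hpre : uj <+: l₁ :=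
    List.prefix_of_prefix_length_le ⟨uj, rfl⟩ (heq ▸ ⟨l₂, rfl⟩) hlen
  have : a ∈ l₁ := hpre.sublist.subset haj
  exact hna (hal a (h1.subset this))

lemma no_sub_bwd {A' : Set α} {al uj : List α}
    (hal : ∀ a ∈ al, a ∈ A') (hb : ∃ a ∈ uj, a ∉ A') :
    ¬ ((uj ++ uj) <+ (uj ++ al)) := by
  intro h
  have h' : (uj.reverse ++ uj.reverse) <+ (al.reverse ++ uj.reverse) := by
    have := h.reverse
    simpa [List.reverse_append] using this
  refine no_sub_fwd (Aj := A') ?_ ?_ h'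
  · intro a ha'; exact hal a (List.mem_reverse.mp ha')
  · obtain ⟨a, ha1, ha2⟩ := hb
    exact ⟨a, List.mem_reverse.mpr ha1, ha2⟩

lemma step_fwd {Aj : Set α} {al uj rest x r s : List α}
    (hal : ∀ a ∈ al, a ∈ Aj) (ha : ∃ a ∈ uj, a ∉ Aj)
    (hx : x ∈ cc uj 2) (hs : s <:+ al ++ uj) (heq : x ++ r = s ++ rest) :
    r <:+ rest := by
  rcases le_or_gt s.length x.length with hlen | hlen
  · rcases List.append_eq_append_iff.mp heq with ⟨a', h1, h2⟩ | ⟨c', h1, h2⟩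
    · have ha' : a' = [] := by
        have := congrArg List.length h1
        simp at this
        exact List.length_eq_zero_iff.mp (by omega)
      subst ha'
      simp at h2
      rw [h2]
    · exact ⟨c', h2.symm⟩
  · exfalso
    obtain ⟨d, hd⟩ := hs
    have hpre : x <+: s :=
      List.prefix_of_prefix_length_le ⟨r, heq⟩ ⟨rest, rfl⟩ hlen.le
    obtain ⟨s', rfl⟩ := hpre
    have hs' : s' ≠ [] := by
      intro hh; subst hh; simp at hlen
    rcases hx with hinf | hsub
    · obtain ⟨p, q, hpq⟩ := hinf
      have : q ++ s' = [] := by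
        refine occ_fwd hal ha (d := d ++ p) ?_
        rw [← hd, ← hpq]
        simp [List.append_assoc]
      simp at this
      exact hs' this.2
    · rw [wpow_two] at hsub
      have hxinf : x <:+: al ++ uj := ⟨d, s', by rw [← hd]; simp [List.append_assoc]⟩
      exact no_sub_fwd hal ha (hsub.trans hxinf.sublist)

lemma step_bwd {A' : Set α} {uj al x Z' R' W D : List α}
    (hal : ∀ a ∈ al, a ∈ A') (hb : ∃ a ∈ uj, a ∉ A')
    (hx : x ∈ cc uj 2) (hW : W = D ++ (uj ++ (al ++ R')))
    (hZ : (x ++ Z') <:+ W) (hR' : R' <:+ Z') :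
    (uj ++ (al ++ R')) <:+ x ++ Z' := by
  have hRW : (uj ++ (al ++ R')) <:+ W := ⟨D, hW.symm⟩
  rcases le_or_gt (uj ++ (al ++ R')).length (x ++ Z').length with hlen | hlen
  · exact List.suffix_of_suffix_length_le hRW hZ hlen
  · exfalso
    have hZR : (x ++ Z') <:+ (uj ++ (al ++ R')) :=
      List.suffix_of_suffix_length_le hZ hRW hlen.le
    obtain ⟨d, hd⟩ := hZR
    have hdne : d ≠ [] := by
      intro hh; subst hh
      simp at hd
      rw [hd] at hlen
      exact lt_irrefl _ hlen
    obtain ⟨m, rfl⟩ := hR'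
    have hcan : uj ++ al = d ++ (x ++ m) := by
      have h1 : (d ++ (x ++ m)) ++ R' = (uj ++ al) ++ R' := by
        simpa [List.append_assoc] using hd
      exact (List.append_cancel_right h1).symm
    rcases hx with hinf | hsub
    · obtain ⟨p, q, hpq⟩ := hinf
      have : d ++ p = [] := by
        refine occ_bwd hal hb (e := q ++ m) ?_
        rw [hcan, ← hpq]
        simp [List.append_assoc]
      simp at this
      exact hdne this.1
    · rw [wpow_two] at hsub
      have hxinf : x <:+: uj ++ al := ⟨d, m, by rw [hcan]; simp [List.append_assoc]⟩
      exact no_sub_bwd hal hb (hsub.trans hxinf.sublist)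

lemma suffix_append_split {r A B : List α} (h : r <:+ A ++ B) :
    r <:+ B ∨ ∃ s, s <:+ A ∧ r = s ++ B := by
  rcases le_or_gt r.length B.length with hl | hl
  · exact Or.inl (List.suffix_of_suffix_length_le h (List.suffix_append A B) hl)
  · right
    have hB : B <:+ r := List.suffix_of_suffix_length_le (List.suffix_append A B) h hl.le
    obtain ⟨s, rfl⟩ := hB
    refine ⟨s, ?_, rfl⟩
    obtain ⟨d, hd⟩ := h
    have : (d ++ s) ++ B = A ++ B := by rw [← hd]; simp
    exact ⟨d, List.append_cancel_right this⟩

end Aux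

theorem stmt_16 {α : Type*} [DecidableEq α] (n : ℕ) (hn : 2 ≤ n)
    (u : ℕ → List α) (A : ℕ → Set α)
    (hA : ∀ i, 1 ≤ i → i ≤ n → (A i).Nonempty)
    (hu : ∀ i, 1 ≤ i → i ≤ n - 1 →
      u i ≠ [] ∧ (∃ x ∈ u i, x ∉ A i) ∧ (∃ x ∈ u i, x ∉ A (i + 1)))
    (al : ℕ → List α) (hal : ∀ i, 1 ≤ i → i ≤ n → ∀ x ∈ al i, x ∈ A i)
    (w : List α)
    (hw : w = u 0 ++ (List.range n).flatMap fun j => al (j + 1) ++ u (j + 1)) :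
    ∀ i, 1 ≤ i → i ≤ n → ∀ c ∉ A i,
      w ∉ chainConc
        ((((if u 0 = [] then [] else [u 0]) ++
            ((List.range (i - 1)).map fun j => u (j + 1)) ++ [[c]] ++
            ((List.range (n - i)).map fun j => u (i + j)) ++
            (if u n = [] then [] else [u n])).map fun x => cc x 2)) := by
  intro i h1i hin c hc hmem
  -- the suffix of w after block u_j
  obtain ⟨Qf, hQf⟩ : ∃ Qf : ℕ → List α, ∀ j, Qf j =
      (List.range (n - j)).flatMap fun m => al (j + m + 1) ++ u (j + m + 1) :=
    ⟨_, fun j => rfl⟩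
  have hQ : ∀ j, j < n → Qf j = al (j + 1) ++ (u (j + 1) ++ Qf (j + 1)) := by
    intro j hj
    have h1 : n - j = (n - (j + 1)) + 1 := by omega
    have h2 : (fun m => al (j + (m + 1) + 1) ++ u (j + (m + 1) + 1)) =
        (fun m => al ((j + 1) + m + 1) ++ u ((j + 1) + m + 1)) := by
      funext m
      have e : j + (m + 1) + 1 = (j + 1) + m + 1 := by omega
      rw [e]
    calc Qf j = (List.range ((n - (j + 1)) + 1)).flatMap
          (fun m => al (j + m + 1) ++ u (j + m + 1)) := by rw [hQf j, h1]
      _ = (al (j + 0 + 1) ++ u (j + 0 + 1)) ++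
          ((List.range (n - (j + 1))).map Nat.succ).flatMap
            (fun m => al (j + m + 1) ++ u (j + m + 1)) := by
            rw [List.range_succ_eq_map]; simp [List.flatMap_cons]
      _ = (al (j + 1) ++ u (j + 1)) ++
          (List.range (n - (j + 1))).flatMap
            (fun m => al (j + (m + 1) + 1) ++ u (j + (m + 1) + 1)) := by
            rw [List.flatMap_map]
      _ = al (j + 1) ++ (u (j + 1) ++ Qf (j + 1)) := by
            rw [h2, hQf (j + 1)]; simp [List.append_assoc]
  have hQn : Qf n = [] := by rw [hQf n]; simp
  have hw0 : w = u 0 ++ Qf 0 := by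
    rw [hw, hQf 0]
    simp
  have hWsplit : ∀ j, j ≤ n → ∃ D, w = D ++ (u j ++ Qf j) := by
    intro j
    induction j with
    | zero => intro _; exact ⟨[], by simpa using hw0⟩
    | succ j ih =>
        intro hj
        obtain ⟨D, hD⟩ := ih (by omega)
        refine ⟨D ++ u j ++ al (j + 1), ?_⟩
        rw [hD, hQ j (by omega)]
        simp [List.append_assoc]
  -- forward chains
  obtain ⟨Ef, hEf⟩ : ∃ Ef : ℕ → List (Set (List α)), ∀ j, Ef j =
      ((if u 0 = [] then [] else [u 0]).map fun x => cc x 2) ++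
      (List.range j).map (fun m => cc (u (m + 1)) 2) :=
    ⟨_, fun j => rfl⟩
  have fwd : ∀ j, j ≤ n - 1 → ∀ F r, F ∈ chainConc (Ef j) → F ++ r = w → r <:+ Qf j := by
    intro j
    induction j with
    | zero =>
        intro _ F r hF heq
        rw [hEf 0] at hF
        simp only [List.range_zero, List.map_nil, List.append_nil] at hF
        by_cases h0 : u 0 = []
        · rw [if_pos h0] at hF
          simp only [List.map_nil] at hF
          have hF' : F = [] := hF
          subst hF'
          simp at heq
          rw [heq, hw0, h0]
          simp
        · rw [if_neg h0] at hF
          simp only [List.map_cons, List.map_nil] at hF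
          rcases mem_chainConc_cons.mp hF with ⟨x, hx, y, hy, rfl⟩
          have hy' : y = [] := hy
          subst hy'
          have heq' : x ++ r = u 0 ++ Qf 0 := by
            rw [← hw0, ← heq]; simp
          refine step_fwd (Aj := (∅ : Set α)) (al := []) (by simp) ?_ hx ?_ heq'
          · obtain ⟨a, ha⟩ := List.exists_mem_of_ne_nil _ h0
            exact ⟨a, ha, by simp⟩
          · simp
    | succ j ih =>
        intro hj F r hF heq
        have hEsucc : Ef (j + 1) = Ef j ++ [cc (u (j + 1)) 2] := by
          rw [hEf (j + 1), hEf j, List.range_succ]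
          simp [List.append_assoc]
        rw [hEsucc] at hF
        rcases mem_chainConc_append.mp hF with ⟨F', hF', G, hG, rfl⟩
        rcases mem_chainConc_cons.mp hG with ⟨x, hx, y, hy, rfl⟩
        have hy' : y = [] := hy
        subst hy'
        have ih' : (x ++ r) <:+ Qf j := by
          refine ih (by omega) F' (x ++ r) hF' ?_
          rw [← heq]; simp
        rw [hQ j (by omega), ← List.append_assoc] at ih'
        rcases suffix_append_split ih' with h | ⟨s, hs, heq2⟩
        · exact (List.suffix_append x r).trans h
        · exact step_fwd (hal (j + 1) (by omega) (by omega))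
            ((hu (j + 1) (by omega) (by omega)).2.1) hx hs heq2
  -- backward chains
  obtain ⟨Eb, hEb⟩ : ∃ Eb : ℕ → List (Set (List α)), ∀ k, Eb k =
      ((List.range k).map fun m => cc (u (n - k + m)) 2) ++
      ((if u n = [] then [] else [u n]).map fun x => cc x 2) :=
    ⟨_, fun k => rfl⟩
  have bwd : ∀ k, k ≤ n - 1 → ∀ Z, Z <:+ w → Z ∈ chainConc (Eb k) →
      (u (n - k) ++ Qf (n - k)) <:+ Z := by
    intro k
    induction k with
    | zero =>
        intro _ Z hZw hZ
        rw [hEb 0] at hZ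
        simp only [List.range_zero, List.map_nil, List.nil_append, Nat.sub_zero] at hZ ⊢
        by_cases hn0 : u n = []
        · rw [if_pos hn0] at hZ
          simp only [List.map_nil] at hZ
          have hZ' : Z = [] := hZ
          subst hZ'
          rw [hn0, hQn]
          simp
        · rw [if_neg hn0] at hZ
          simp only [List.map_cons, List.map_nil] at hZ
          rcases mem_chainConc_cons.mp hZ with ⟨x, hx, y, hy, rfl⟩
          have hy' : y = [] := hy
          subst hy'
          rw [hQn, List.append_nil]
          obtain ⟨D, hD⟩ := hWsplit n le_rfl
          have hun : u n <:+ w := ⟨D, by rw [hD, hQn]; simp⟩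
          rcases le_or_gt (u n).length (x ++ []).length with h | h
          · exact List.suffix_of_suffix_length_le hun hZw h
          · exfalso
            simp only [List.append_nil] at h
            rcases hx with hinf | hsub
            · have := hinf.length_le; omega
            · rw [wpow_two] at hsub
              have := hsub.length_le
              simp at this; omega
    | succ k ih =>
        intro hk Z hZw hZ
        have hj1 : 1 ≤ n - (k + 1) := by omega
        have hEbsucc : Eb (k + 1) = cc (u (n - (k + 1))) 2 :: Eb k := by
          rw [hEb (k + 1), hEb k, List.range_succ_eq_map]
          simp only [List.map_cons, List.map_map]
          have h2 : ((fun m => cc (u (n - (k + 1) + m)) 2) ∘ Nat.succ) =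
              (fun m => cc (u (n - k + m)) 2) := by
            funext m
            have e : n - (k + 1) + (Nat.succ m) = n - k + m := by omega
            simp only [Function.comp]
            rw [show n - (k+1) + m.succ = n - k + m from e]
          rw [h2]
          simp
        rw [hEbsucc] at hZ
        rcases mem_chainConc_cons.mp hZ with ⟨x, hx, Z', hZ', rfl⟩
        have hZ'w : Z' <:+ w := (List.suffix_append x Z').trans hZw
        have ihr := ih (by omega) Z' hZ'w hZ'
        have hnk : n - k = (n - (k + 1)) + 1 := by omega
        rw [hnk] at ihr
        set j := n - (k + 1) with hjdef
        obtain ⟨D, hD⟩ := hWsplit j (by omega)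
        rw [hQ j (by omega)] at hD
        have hstep := step_bwd (hal (j + 1) (by omega) (by omega))
          ((hu j (by omega) (by omega)).2.2) hx hD hZw ihr
        rw [← hQ j (by omega)] at hstep
        exact hstep
  -- decompose the membership
  have hchain : (((if u 0 = [] then [] else [u 0]) ++
      ((List.range (i - 1)).map fun j => u (j + 1)) ++ [[c]] ++
      ((List.range (n - i)).map fun j => u (i + j)) ++
      (if u n = [] then [] else [u n])).map fun x => cc x 2) =
      Ef (i - 1) ++ ([cc [c] 2] ++ Eb (n - i)) := by
    rw [hEf (i - 1), hEb (n - i)]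
    have hni : n - (n - i) = i := by omega
    simp only [hni, List.map_append, List.map_map, List.map_cons, List.map_nil]
    simp [List.append_assoc, Function.comp_def]
  rw [hchain] at hmem
  rcases mem_chainConc_append.mp hmem with ⟨F, hF, rest1, hrest1, hw1⟩
  rcases mem_chainConc_append.mp hrest1 with ⟨Y, hY, Z, hZ, rfl⟩
  rcases mem_chainConc_cons.mp hY with ⟨y, hy, y2, hy2, rfl⟩
  have hy2' : y2 = [] := hy2
  subst hy2'
  rw [List.append_nil] at hw1
  -- c ∈ y
  have hcy : c ∈ y := by
    rcases hy with hinf | hsub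
    · exact hinf.sublist.subset (by simp)
    · rw [wpow_two] at hsub
      exact hsub.subset (by simp)
  -- forward conclusion
  have hfwd : (y ++ Z) <:+ Qf (i - 1) := by
    refine fwd (i - 1) (by omega) F (y ++ Z) hF ?_
    rw [← hw1]
  have hi1 : i - 1 + 1 = i := by omega
  rw [hQ (i - 1) (by omega), hi1] at hfwd
  -- backward conclusion
  have hZw : Z <:+ w := by
    rw [hw1]
    exact (List.suffix_append y Z).trans (List.suffix_append F (y ++ Z))
  have hbwd := bwd (n - i) (by omega) Z hZw hZ
  have hni : n - (n - i) = i := by omega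
  rw [hni] at hbwd
  obtain ⟨m, rfl⟩ := hbwd
  -- now y ++ (m ++ (u i ++ Qf i)) <:+ al i ++ (u i ++ Qf i)
  obtain ⟨d, hd⟩ := hfwd
  have hcal : c ∈ al i := by
    have h1 : (d ++ y ++ m) ++ (u i ++ Qf i) = al i ++ (u i ++ Qf i) := by
      rw [← hd]; simp [List.append_assoc]
    have h2 : d ++ y ++ m = al i := List.append_cancel_right h1
    rw [← h2]
    simp [hcy]
  exact hc (hal i h1i hin c hcal)
end

section
/- For every k ≥ 0 and every d with 0 ≤ d ≤ ⌈k/2⌉ − 1, the inclusion P(J_k, n^d) ⊆ P(J_k, n^{d+1}) is strict, where P(V, s(n)) denotes the class of languages over {0,1} recognised by sequences of programs over monoids in the variety V of length at most a constant times s(n). Concretely, for every j ≥ 1 and every finite monoid M of order at most j, there exist n ≥ 1 and a k-selector σ over n such that no program over M on {0,1}^{(k+1)n} of length at most j·((k+1)n)^k recognises K_{n,σ}. -/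
/-- The flat position of the `j`-th letter of the `i`-th block of `n` letters
in a word of length `(k+1)·n`. -/
def blockPos (k n : ℕ) (i : Fin (k + 1)) (j : Fin n) : Fin ((k + 1) * n) :=
  ⟨i.val * n + j.val, by
    have hj := j.isLt
    have hi : i.val + 1 ≤ k + 1 := i.isLt
    have h1 : i.val * n + j.val < (i.val + 1) * n := by
      have : (i.val + 1) * n = i.val * n + n := by ring
      omega
    have h2 : (i.val + 1) * n ≤ (k + 1) * n := Nat.mul_le_mul_right n hi
    omega⟩

/-- The language `K_{n,σ}` of words over `{0,1}` of length `(k+1)·n` whose first `k`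
blocks of `n` letters each contain `1` exactly once, at positions forming the vector `ρ`,
and whose last block carries a `1` at some position in `σ ρ`. -/
def KselFlat (k n : ℕ) (σ : (Fin k → Fin n) → Set (Fin n)) :
    Set (Fin ((k + 1) * n) → Bool) :=
  {w | ∃ ρ : Fin k → Fin n,
    (∀ (i : Fin k) (j : Fin n), w (blockPos k n i.castSucc j) = true ↔ j = ρ i) ∧
    ∃ j ∈ σ ρ, w (blockPos k n (Fin.last k) j) = true}

/-- A program over a monoid `M` on `{0,1}^m` is a list of instructions `(p, f)`;
it evaluates on input `w` to the ordered product of the `f (w p)`. -/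
def evalProg {m : ℕ} {M : Type*} [Monoid M]
    (P : List (Fin m × (Bool → M))) (w : Fin m → Bool) : M :=
  (P.map (fun ins => ins.2 (w ins.1))).prod

lemma blockPos_injAux {k n : ℕ} {i i' : Fin (k + 1)} {j j' : Fin n}
    (h : blockPos k n i j = blockPos k n i' j') : i = i' ∧ j = j' := by
  have hn : 0 < n := j.pos
  have h' : i.val * n + j.val = i'.val * n + j'.val := congrArg Fin.val h
  have hi : i.val = i'.val := by
    have e1 : (n * i.val + j.val) / n = i.val + j.val / n := Nat.mul_add_div hn _ _
    have e2 : (n * i'.val + j'.val) / n = i'.val + j'.val / n := Nat.mul_add_div hn _ _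
    rw [Nat.mul_comm] at e1 e2
    rw [Nat.div_eq_of_lt j.isLt] at e1
    rw [Nat.div_eq_of_lt j'.isLt] at e2
    rw [h'] at e1
    omega
  refine ⟨Fin.ext hi, Fin.ext ?_⟩
  rw [hi] at h'
  omega

open Classical in
/-- The word with `1` exactly at the positions `ρ i` of block `i` (for `i < k`)
and position `j` of the last block. -/
noncomputable def indword (k n : ℕ) (ρ : Fin k → Fin n) (j : Fin n) :
    Fin ((k + 1) * n) → Bool :=
  fun p => decide (p = blockPos k n (Fin.last k) j ∨
    ∃ i : Fin k, p = blockPos k n i.castSucc (ρ i))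

lemma mem_indword {k n : ℕ} (σ : (Fin k → Fin n) → Set (Fin n))
    (ρ : Fin k → Fin n) (j : Fin n) :
    indword k n ρ j ∈ KselFlat k n σ ↔ j ∈ σ ρ := by
  classical
  constructor
  · rintro ⟨ρ', h1, j', hj', h2⟩
    have hρ : ρ' = ρ := by
      funext i
      have hw : indword k n ρ j (blockPos k n i.castSucc (ρ i)) = true := by
        simp only [indword, decide_eq_true_eq]
        exact Or.inr ⟨i, rfl⟩
      exact ((h1 i (ρ i)).mp hw).symm
    simp only [indword, decide_eq_true_eq] at h2
    rcases h2 with h2 | ⟨i, h2⟩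
    · obtain ⟨-, hjj⟩ := blockPos_injAux h2
      subst hρ
      exact hjj ▸ hj'
    · obtain ⟨hcon, -⟩ := blockPos_injAux h2
      exact absurd hcon.symm (Fin.castSucc_lt_last i).ne
  · intro hj
    refine ⟨ρ, ?_, j, hj, ?_⟩
    · intro i j'
      constructor
      · intro h
        simp only [indword, decide_eq_true_eq] at h
        rcases h with h | ⟨i', h⟩
        · exact absurd (blockPos_injAux h).1 (Fin.castSucc_lt_last i).ne
        · obtain ⟨hi, hjj⟩ := blockPos_injAux h
          have : i = i' := Fin.castSucc_injective _ hi
          rw [this]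
          exact hjj
      · rintro rfl
        simp only [indword, decide_eq_true_eq]
        exact Or.inr ⟨i, rfl⟩
    · simp [indword]

lemma Ksel_injective {k n : ℕ} : Function.Injective (KselFlat k n) := by
  intro σ₁ σ₂ h
  funext ρ
  ext j
  constructor
  · intro hj
    exact (mem_indword σ₂ ρ j).mp (h ▸ (mem_indword σ₁ ρ j).mpr hj)
  · intro hj
    exact (mem_indword σ₁ ρ j).mp (h ▸ (mem_indword σ₂ ρ j).mpr hj)

lemma sq_lt_two_pow (t : ℕ) (ht : 5 ≤ t) : t ^ 2 < 2 ^ t := by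
  induction t, ht using Nat.le_induction with
  | base => norm_num
  | succ t ht ih =>
    have h2 : (t + 1) ^ 2 < 2 * t ^ 2 := by nlinarith
    calc (t + 1) ^ 2 < 2 * t ^ 2 := h2
      _ < 2 * 2 ^ t := by omega
      _ = 2 ^ (t + 1) := by rw [pow_succ, Nat.mul_comm]

lemma numeric (k j c : ℕ) (hj : 1 ≤ j) :
    ∃ n, 1 ≤ n ∧
      ((k + 1) * n * c ^ 2 + 1) ^ (j * ((k + 1) * n) ^ k) * 2 ^ c
        < (2 ^ n) ^ (n ^ k) := by
  set C := j * (k + 1) ^ k with hCdef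
  have hC1 : 1 ≤ C := Nat.mul_pos hj (Nat.pow_pos (n := k) (by omega))
  set K := (k + 1) * c ^ 2 + 1 with hKdef
  set S := K * C + c with hSdef
  set t := C + S + 5 with htdef
  have ht5 : 5 ≤ t := by omega
  refine ⟨2 ^ t, Nat.one_le_two_pow, ?_⟩
  set n := 2 ^ t with hndef
  have hn1 : 1 ≤ n := Nat.one_le_two_pow
  -- step 1: base bound
  have hbase : (k + 1) * n * c ^ 2 + 1 ≤ K * n := by
    have : K * n = (k + 1) * n * c ^ 2 + n := by ring
    omega
  have hK2 : K * n ≤ 2 ^ (K + t) := by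
    calc K * n ≤ 2 ^ K * 2 ^ t := Nat.mul_le_mul (Nat.lt_two_pow_self (n := K)).le le_rfl
      _ = 2 ^ (K + t) := (pow_add 2 K t).symm
  -- step 2: the length
  have hL : j * ((k + 1) * n) ^ k = C * 2 ^ (t * k) := by
    rw [mul_pow, hndef, ← pow_mul, hCdef]
    ring
  -- step 3: exponent inequality
  have h6 : (K + t) * C + c < 2 ^ t := by
    have hsq := sq_lt_two_pow t ht5
    have h7 : (K + t) * C + c ≤ t ^ 2 := by
      have e : (K + t) * C + c = S + t * C := by rw [hSdef]; ring
      have h8 : 1 + C ≤ t := by omega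
      calc (K + t) * C + c = S + t * C := e
        _ ≤ t + t * C := by omega
        _ = t * (1 + C) := by ring
        _ ≤ t * t := Nat.mul_le_mul le_rfl h8
        _ = t ^ 2 := (pow_two t).symm
    omega
  have hpos : 0 < 2 ^ (t * k) := Nat.pow_pos (by omega)
  have hexp : (K + t) * (C * 2 ^ (t * k)) + c < n * n ^ k := by
    have e1 : (K + t) * (C * 2 ^ (t * k)) + c ≤ ((K + t) * C + c) * 2 ^ (t * k) := by
      have : c ≤ c * 2 ^ (t * k) := Nat.le_mul_of_pos_right c hpos
      calc (K + t) * (C * 2 ^ (t * k)) + c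
          = (K + t) * C * 2 ^ (t * k) + c := by ring
        _ ≤ (K + t) * C * 2 ^ (t * k) + c * 2 ^ (t * k) := by omega
        _ = ((K + t) * C + c) * 2 ^ (t * k) := by ring
    have e2 : ((K + t) * C + c) * 2 ^ (t * k) < 2 ^ t * 2 ^ (t * k) :=
      (Nat.mul_lt_mul_right hpos).mpr h6
    have e3 : n * n ^ k = 2 ^ t * 2 ^ (t * k) := by
      rw [hndef, ← pow_mul]
    omega
  -- assemble
  calc ((k + 1) * n * c ^ 2 + 1) ^ (j * ((k + 1) * n) ^ k) * 2 ^ c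
      ≤ (2 ^ (K + t)) ^ (j * ((k + 1) * n) ^ k) * 2 ^ c := by
        exact Nat.mul_le_mul_right _ (Nat.pow_le_pow_left (hbase.trans hK2) _)
    _ = 2 ^ ((K + t) * (C * 2 ^ (t * k)) + c) := by
        rw [hL, ← pow_mul, ← pow_add]
    _ < 2 ^ (n * n ^ k) := Nat.pow_lt_pow_right (by norm_num) hexp
    _ = (2 ^ n) ^ (n ^ k) := (pow_mul 2 n (n ^ k))

theorem stmt_18 (k : ℕ) (j : ℕ) (hj : 1 ≤ j) (M : Type*) [Monoid M] [Fintype M]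
    (hM : Fintype.card M ≤ j) :
    ∃ n, 1 ≤ n ∧ ∃ σ : (Fin k → Fin n) → Set (Fin n),
      ∀ P : List (Fin ((k + 1) * n) × (Bool → M)),
        P.length ≤ j * ((k + 1) * n) ^ k →
        ∀ F : Set M, KselFlat k n σ ≠ {w | evalProg P w ∈ F} := by
  classical
  obtain ⟨n, hn1, hnum⟩ := numeric k j (Fintype.card M) hj
  refine ⟨n, hn1, ?_⟩
  by_contra hA
  push_neg at hA
  choose P hlen F hF using hA
  set L := j * ((k + 1) * n) ^ k with hLdef
  let Φ : ((Fin k → Fin n) → Set (Fin n)) →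
      (Fin L → Option (Fin ((k + 1) * n) × (Bool → M))) × (M → Bool) :=
    fun σ => (fun i => (P σ)[i.val]?, fun x => decide (x ∈ F σ))
  have hΦ : Function.Injective Φ := by
    intro σ₁ σ₂ h
    have h1 := congrArg Prod.fst h
    have h2 := congrArg Prod.snd h
    simp only [Φ] at h1 h2
    have hP : P σ₁ = P σ₂ := by
      apply List.ext_getElem?
      intro i
      by_cases hi : i < L
      · exact congrFun h1 ⟨i, hi⟩
      · rw [List.getElem?_eq_none (by have := hlen σ₁; omega),
          List.getElem?_eq_none (by have := hlen σ₂; omega)]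
    have hFσ : F σ₁ = F σ₂ := by
      ext x
      exact decide_eq_decide.mp (congrFun h2 x)
    apply Ksel_injective
    rw [hF σ₁, hF σ₂, hP, hFσ]
  have hcard := Fintype.card_le_of_injective Φ hΦ
  simp only [Fintype.card_prod, Fintype.card_fun, Fintype.card_set, Fintype.card_option,
    Fintype.card_fin, Fintype.card_bool] at hcard
  exact absurd hcard (Nat.not_le.mpr hnum)
end
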